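/- arXiv:2504.12293 — 2 statements merged into one kernel-verified Lean document; each statement's English description precedes it below -/
import Mathlib

section
/- For functions f, g : ℝ^m → ℝ satisfying E[f(X)²] < ∞ and E[g(X)²] < ∞, and any r ∈ (0,1), one has (d/dr) E[f(Y_0) g(Y_r)] = − Σ_{i=1}^m Inf_i^{f,g}(r). -/
/-!
**Statement 11** (Proposition 2.4 of the paper, after Ahlberg–Deijfen–Sfragara; a
dynamical Russo–Margulis formula).

Let `F` be a distribution on `ℝ` (identified with the probability measure `μ` it
determines), let `X = (X(1), …, X(m))` be i.i.d. samples from `μ`, and for `r ∈ [0,1]` let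
`(Y_0, Y_r)` be coupled so that `Y_0 = X` and `Y_r` is obtained from `X` by independently
resampling each coordinate with probability `r`.  We realize this coupling explicitly on
the space `(Fin m → ℝ) × (Fin m → ℝ) × (Fin m → Bool)` carrying
`(pi μ) ⊗ (pi μ) ⊗ (pi Bernoulli(r))`: the first factor is `X`, the second the fresh
samples, the third the resampling selectors.

With `D_i^x f = f ∘ σ_i^x - ∫ f ∘ σ_i^y dF(y)` and the co-influence
`Inf_i^{f,g}(r) = ∫ E[D_i^x f(Y_0) · D_i^x g(Y_r)] dF(x)`, the theorem states that for
`f, g : ℝ^m → ℝ` with `E[f(X)²] < ∞` and `E[g(X)²] < ∞` and every `r ∈ (0,1)`,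
`(d/dr) E[f(Y_0) g(Y_r)] = - ∑_{i=1}^m Inf_i^{f,g}(r)`.
-/

open MeasureTheory ProbabilityTheory

noncomputable section

namespace RussoMargulis

/-- The Bernoulli distribution on `Bool` with success probability `r`. -/
def berMeasure (r : ℝ) : Measure Bool :=
  ENNReal.ofReal (1 - r) • Measure.dirac false + ENNReal.ofReal r • Measure.dirac true

/-- The coupling measure for `(X, X′, selectors)`: `X` and `X′` are independent samples
from `μ^{⊗m}` and the selectors are i.i.d. Bernoulli(`r`). -/
def coupling (μ : Measure ℝ) (m : ℕ) (r : ℝ) :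
    Measure ((Fin m → ℝ) × (Fin m → ℝ) × (Fin m → Bool)) :=
  (Measure.pi fun _ => μ).prod
    ((Measure.pi fun _ => μ).prod (Measure.pi fun _ => berMeasure r))

/-- `Y_0 = X`. -/
def Y0 {m : ℕ} (w : (Fin m → ℝ) × (Fin m → ℝ) × (Fin m → Bool)) : Fin m → ℝ := w.1

/-- `Y_r`: the `i`-th coordinate of `X` is replaced by the fresh sample `X′(i)` exactly
when the `i`-th selector is on. -/
def Yr {m : ℕ} (w : (Fin m → ℝ) × (Fin m → ℝ) × (Fin m → Bool)) : Fin m → ℝ :=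
  fun i => if w.2.2 i then w.2.1 i else w.1 i

/-- The operator `D_i^x f = f ∘ σ_i^x - ∫ f ∘ σ_i^y dF(y)`, where `σ_i^x` replaces the
`i`-th coordinate by `x`. -/
def Dop (μ : Measure ℝ) {m : ℕ} (f : (Fin m → ℝ) → ℝ) (i : Fin m) (x : ℝ)
    (v : Fin m → ℝ) : ℝ :=
  f (Function.update v i x) - ∫ y, f (Function.update v i y) ∂μ

/-- The co-influence `Inf_i^{f,g}(r) = ∫ E[D_i^x f(Y_0) · D_i^x g(Y_r)] dF(x)`. -/
def coInf (μ : Measure ℝ) {m : ℕ} (f g : (Fin m → ℝ) → ℝ) (i : Fin m) (r : ℝ) : ℝ :=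
  ∫ x, (∫ w, Dop μ f i x (Y0 w) * Dop μ g i x (Yr w) ∂coupling μ m r) ∂μ

section Aux

open Function Set
open scoped ENNReal


variable {m : ℕ} (μ : Measure ℝ) [IsProbabilityMeasure μ]

/-- merge of two configurations according to selectors. -/
def merge (b : Fin m → Bool) (p : (Fin m → ℝ) × (Fin m → ℝ)) : Fin m → ℝ :=
  fun i => if b i then p.2 i else p.1 i

lemma measurable_merge (b : Fin m → Bool) : Measurable (merge b) := by
  apply measurable_pi_lambda
  intro i
  by_cases h : b i <;> simp only [merge, h, if_true, if_false]
  · exact (measurable_pi_apply i).comp measurable_snd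
  · exact (measurable_pi_apply i).comp measurable_fst

lemma mp_update (i : Fin m) :
    MeasurePreserving (fun q : (Fin m → ℝ) × ℝ => update q.1 i q.2)
      ((Measure.pi fun _ : Fin m => μ).prod μ) (Measure.pi fun _ : Fin m => μ) := by
  refine ⟨measurable_update', ?_⟩
  refine (Measure.pi_eq fun A hA => ?_).symm
  rw [Measure.map_apply measurable_update' (MeasurableSet.univ_pi hA)]
  have hpre : (fun q : (Fin m → ℝ) × ℝ => update q.1 i q.2) ⁻¹' (Set.pi Set.univ A)
      = (Set.pi Set.univ fun j => if j = i then Set.univ else A j) ×ˢ (A i) := by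
    ext q
    simp only [Set.mem_preimage, Set.mem_pi, Set.mem_univ, forall_true_left, Set.mem_prod]
    constructor
    · intro h
      refine ⟨fun j => ?_, by simpa using h i⟩
      by_cases hj : j = i
      · simp [hj]
      · rw [if_neg hj]
        have := h j; rwa [update_of_ne hj] at this
    · rintro ⟨h1, h2⟩ j
      by_cases hj : j = i
      · subst hj; simpa using h2
      · have := h1 j; rw [if_neg hj] at this; simpa [update_of_ne hj] using this
  rw [hpre, Measure.prod_prod, Measure.pi_pi]
  have : ∀ j : Fin m, μ (if j = i then Set.univ else A j) = if j = i then 1 else μ (A j) := by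
    intro j; by_cases hj : j = i <;> simp [hj]
  simp_rw [this]
  have h1 : (∏ x : Fin m, if x = i then 1 else μ (A x))
      = ∏ x ∈ Finset.univ.erase i, μ (A x) := by
    rw [← Finset.prod_erase (f := fun x => if x = i then 1 else μ (A x)) (a := i) Finset.univ
      (by simp)]
    exact Finset.prod_congr rfl fun x hx => if_neg (Finset.ne_of_mem_erase hx)
  rw [h1, Finset.prod_erase_mul _ _ (Finset.mem_univ i)]

lemma mp_merge (b : Fin m → Bool) :
    MeasurePreserving (merge b)
      ((Measure.pi fun _ : Fin m => μ).prod (Measure.pi fun _ : Fin m => μ))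
      (Measure.pi fun _ : Fin m => μ) := by
  refine ⟨measurable_merge b, ?_⟩
  refine (Measure.pi_eq fun A hA => ?_).symm
  rw [Measure.map_apply (measurable_merge b) (MeasurableSet.univ_pi hA)]
  have hpre : merge b ⁻¹' (Set.pi Set.univ A)
      = (Set.pi Set.univ fun j => if b j then Set.univ else A j) ×ˢ
        (Set.pi Set.univ fun j => if b j then A j else Set.univ) := by
    ext p
    simp only [Set.mem_preimage, Set.mem_pi, Set.mem_univ, forall_true_left, Set.mem_prod,
      merge]
    constructor
    · intro h
      constructor
      · intro j; by_cases hj : b j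
        · simp [hj]
        · have := h j; rw [if_neg hj] at this ⊢; exact this
      · intro j; by_cases hj : b j
        · have := h j; rw [if_pos hj] at this ⊢; exact this
        · simp [hj]
    · rintro ⟨h1, h2⟩ j
      by_cases hj : b j
      · have := h2 j; rw [if_pos hj] at this ⊢; exact this
      · have := h1 j; rw [if_neg hj] at this ⊢; exact this
  rw [hpre, Measure.prod_prod, Measure.pi_pi, Measure.pi_pi, ← Finset.prod_mul_distrib]
  refine Finset.prod_congr rfl fun j _ => ?_
  by_cases hj : b j <;> simp [hj]

lemma mp_interchange {α β γ δ : Type*} [MeasurableSpace α] [MeasurableSpace β]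
    [MeasurableSpace γ] [MeasurableSpace δ]
    (μa : Measure α) (μb : Measure β) (μc : Measure γ) (μd : Measure δ)
    [SigmaFinite μa] [SigmaFinite μb] [SigmaFinite μc] [SigmaFinite μd] :
    MeasurePreserving (fun q : (α × β) × γ × δ => ((q.1.1, q.2.1), (q.1.2, q.2.2)))
      ((μa.prod μb).prod (μc.prod μd)) ((μa.prod μc).prod (μb.prod μd)) := by
  have hM : Measurable (fun q : (α × β) × γ × δ => ((q.1.1, q.2.1), (q.1.2, q.2.2))) := by
    fun_prop
  refine ⟨hM, ?_⟩
  refine (Measure.prod_eq fun s t hs ht => ?_).symm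
  rw [Measure.map_apply hM ((hs.prod ht))]
  have hpre : (fun q : (α × β) × γ × δ => ((q.1.1, q.2.1), (q.1.2, q.2.2))) ⁻¹' (s ×ˢ t)
      = {q : (α × β) × γ × δ | (q.1.1, q.2.1) ∈ s ∧ (q.1.2, q.2.2) ∈ t} := rfl
  rw [hpre]
  have hmeas : MeasurableSet {q : (α × β) × γ × δ | (q.1.1, q.2.1) ∈ s ∧ (q.1.2, q.2.2) ∈ t} :=
    hM (hs.prod ht)
  rw [Measure.prod_apply hmeas]
  have hsect : ∀ ab : α × β,
      (Prod.mk ab ⁻¹' {q : (α × β) × γ × δ | (q.1.1, q.2.1) ∈ s ∧ (q.1.2, q.2.2) ∈ t})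
        = (Prod.mk ab.1 ⁻¹' s) ×ˢ (Prod.mk ab.2 ⁻¹' t) := by
    intro ab; ext cd
    simp only [Set.mem_preimage, Set.mem_setOf_eq, Set.mem_prod]
  simp_rw [hsect, Measure.prod_prod]
  rw [MeasureTheory.lintegral_prod_mul
    (measurable_measure_prodMk_left hs).aemeasurable
    (measurable_measure_prodMk_left ht).aemeasurable]
  rw [← Measure.prod_apply hs, ← Measure.prod_apply ht]

lemma mp_fst {α β : Type*} [MeasurableSpace α] [MeasurableSpace β]
    {μa : Measure α} {μb : Measure β} [IsProbabilityMeasure μb] [SFinite μa] :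
    MeasurePreserving Prod.fst (μa.prod μb) μa :=
  ⟨measurable_fst, by simp⟩

lemma mp_snd {α β : Type*} [MeasurableSpace α] [MeasurableSpace β]
    {μa : Measure α} {μb : Measure β} [IsProbabilityMeasure μa] [SFinite μb] :
    MeasurePreserving Prod.snd (μa.prod μb) μb :=
  ⟨measurable_snd, by simp⟩

lemma mp_integral_comp {α β : Type*} [MeasurableSpace α] [MeasurableSpace β]
    {ρ : Measure α} {ν : Measure β} {T : α → β} (hT : MeasurePreserving T ρ ν)
    {h : β → ℝ} (hh : AEStronglyMeasurable h ν) :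
    ∫ x, h (T x) ∂ρ = ∫ y, h y ∂ν := by
  rw [← hT.map_eq] at hh ⊢
  exact (integral_map hT.measurable.aemeasurable hh).symm

lemma mp_integrable_comp {α β : Type*} [MeasurableSpace α] [MeasurableSpace β]
    {ρ : Measure α} {ν : Measure β} {T : α → β} (hT : MeasurePreserving T ρ ν)
    {h : β → ℝ} (hh : AEStronglyMeasurable h ν) (hint : Integrable h ν) :
    Integrable (fun x => h (T x)) ρ := by
  rw [← hT.map_eq] at hint hh
  exact (integrable_map_measure hh hT.measurable.aemeasurable).1 hint

lemma mp_ae_comp {α β : Type*} [MeasurableSpace α] [MeasurableSpace β]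
    {ρ : Measure α} {ν : Measure β} {T : α → β} (hT : MeasurePreserving T ρ ν)
    {P : β → Prop} (h : ∀ᵐ y ∂ν, P y) : ∀ᵐ x ∂ρ, P (T x) := by
  rw [← hT.map_eq] at h
  exact ae_of_ae_map hT.measurable.aemeasurable h

lemma integrable_mul_of_memL2 {Ω : Type*} [MeasurableSpace Ω] {ρ : Measure Ω}
    {u v : Ω → ℝ} (hu : MemLp u 2 ρ) (hv : MemLp v 2 ρ) :
    Integrable (fun ω => u ω * v ω) ρ := by
  have h12 : (1 : ℝ≥0∞) / 1 = 1 / 2 + 1 / 2 := by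
    rw [ENNReal.add_halves]; simp
  have h : MemLp (u • v) 1 ρ := hv.smul hu
  rw [memLp_one_iff_integrable] at h
  exact h

lemma memL2_of_sq {Ω : Type*} [MeasurableSpace Ω] {ρ : Measure Ω}
    {u : Ω → ℝ} (hu : Measurable u) (h2 : Integrable (fun ω => u ω ^ 2) ρ) :
    MemLp u 2 ρ :=
  (memLp_two_iff_integrable_sq hu.aestronglyMeasurable).2 h2

instance berFinite (s : ℝ) : IsFiniteMeasure (berMeasure s) := by
  constructor
  simp only [berMeasure, Measure.add_apply, Measure.smul_apply, smul_eq_mul]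
  finiteness

lemma isProb_ber {s : ℝ} (hs0 : 0 ≤ s) (hs1 : s ≤ 1) :
    IsProbabilityMeasure (berMeasure s) := by
  constructor
  simp only [berMeasure, Measure.add_apply, Measure.smul_apply, smul_eq_mul,
    MeasureTheory.measure_univ, mul_one]
  rw [← ENNReal.ofReal_add (by linarith) hs0]
  norm_num

lemma berMeasure_singleton (s : ℝ) (c : Bool) :
    berMeasure s {c} = ENNReal.ofReal (if c then s else 1 - s) := by
  cases c <;>
    simp [berMeasure, Measure.dirac_apply' _ (measurableSet_singleton _)]

/-- The weight of a selector pattern. -/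
def wt (b : Fin m → Bool) (s : ℝ) : ℝ := ∏ j, (if b j then s else 1 - s)

lemma wt_nonneg {s : ℝ} (hs0 : 0 ≤ s) (hs1 : s ≤ 1) (b : Fin m → Bool) : 0 ≤ wt b s :=
  Finset.prod_nonneg fun j _ => by by_cases h : b j <;> simp [h] <;> linarith

lemma piBer_singleton {s : ℝ} (hs0 : 0 ≤ s) (hs1 : s ≤ 1) (b : Fin m → Bool) :
    (Measure.pi fun _ : Fin m => berMeasure s) {b} = ENNReal.ofReal (wt b s) := by
  have : ({b} : Set (Fin m → Bool)) = Set.pi Set.univ (fun j => {b j}) := by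
    ext c
    simp [funext_iff, Set.mem_pi]
  rw [this, Measure.pi_pi]
  simp_rw [berMeasure_singleton]
  rw [wt, ← ENNReal.ofReal_prod_of_nonneg]
  intro j _
  by_cases h : b j <;> simp [h] <;> linarith

/-- Embedding of the resampling pair with fixed selector pattern. -/
def iota (b : Fin m → Bool) (p : (Fin m → ℝ) × (Fin m → ℝ)) :
    (Fin m → ℝ) × (Fin m → ℝ) × (Fin m → Bool) := (p.1, p.2, b)

lemma measurable_iota (b : Fin m → Bool) : Measurable (iota (m := m) b) :=
  measurable_fst.prodMk (measurable_snd.prodMk measurable_const)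

lemma prod_smul_right {α β : Type*} [MeasurableSpace α] [MeasurableSpace β]
    (μa : Measure α) [SFinite μa] (νb : Measure β) [SFinite νb] (c : ℝ≥0∞) :
    μa.prod (c • νb) = c • μa.prod νb := by
  ext S hS
  rw [Measure.prod_apply hS, Measure.smul_apply, Measure.prod_apply hS]
  simp_rw [Measure.smul_apply, smul_eq_mul]
  rw [lintegral_const_mul _ (measurable_measure_prodMk_left hS)]

lemma coupling_eq (s : ℝ) :
    coupling μ m s = Measure.sum (fun b : Fin m → Bool =>
      ((Measure.pi fun _ : Fin m => berMeasure s) {b}) •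
        Measure.map (iota b)
          ((Measure.pi fun _ : Fin m => μ).prod (Measure.pi fun _ : Fin m => μ))) := by
  set π : Measure (Fin m → ℝ) := Measure.pi fun _ : Fin m => μ with hπ
  set B : Measure (Fin m → Bool) := Measure.pi fun _ : Fin m => berMeasure s with hB
  have hmap : ∀ b : Fin m → Bool, π.prod (π.prod (Measure.dirac b))
      = Measure.map (iota b) (π.prod π) := by
    intro b
    have mpb : MeasurePreserving (fun v : Fin m → ℝ => (v, b)) π (π.prod (Measure.dirac b)) :=
      ⟨measurable_id.prodMk measurable_const, (Measure.prod_dirac b).symm⟩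
    have := ((MeasurePreserving.id π).prod mpb).map_eq
    rw [← this]
    rfl
  calc coupling μ m s = π.prod (π.prod B) := rfl
    _ = π.prod (π.prod (Measure.sum fun b => B {b} • Measure.dirac b)) := by
        rw [Measure.sum_smul_dirac]
    _ = Measure.sum (fun b : Fin m → Bool => B {b} • Measure.map (iota b) (π.prod π)) := by
        haveI : ∀ n : Fin m → Bool, SFinite (π.prod (B {n} • Measure.dirac n)) :=
          fun n => inferInstance
        rw [Measure.prod_sum_right, Measure.prod_sum_right]
        congr 1
        funext b
        rw [prod_smul_right, prod_smul_right, hmap b]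

lemma integral_coupling {s : ℝ} (hs0 : 0 ≤ s) (hs1 : s ≤ 1)
    (F : (Fin m → ℝ) × (Fin m → ℝ) × (Fin m → Bool) → ℝ) (hFm : Measurable F)
    (hF : ∀ b : Fin m → Bool, Integrable (fun p => F (iota b p))
      ((Measure.pi fun _ : Fin m => μ).prod (Measure.pi fun _ : Fin m => μ))) :
    ∫ w, F w ∂coupling μ m s = ∑ b : Fin m → Bool,
      wt b s * ∫ p, F (iota b p)
        ∂((Measure.pi fun _ : Fin m => μ).prod (Measure.pi fun _ : Fin m => μ)) := by
  rw [coupling_eq μ s, Measure.sum_fintype]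
  rw [integral_finset_sum_measure ?hint]
  case hint =>
    intro b _
    refine Integrable.smul_measure ?_ ?_
    · exact (integrable_map_measure hFm.aestronglyMeasurable
        (measurable_iota b).aemeasurable).2 (hF b)
    · rw [piBer_singleton hs0 hs1]; exact ENNReal.ofReal_ne_top
  refine Finset.sum_congr rfl fun b _ => ?_
  rw [integral_smul_measure, integral_map (measurable_iota b).aemeasurable
    hFm.aestronglyMeasurable, piBer_singleton hs0 hs1,
    ENNReal.toReal_ofReal (wt_nonneg hs0 hs1 b), smul_eq_mul]

lemma mp_master (i : Fin m) {S : Type*} [MeasurableSpace S] {ν : Measure S}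
    [SigmaFinite ν] {a c : S → ℝ}
    (h : MeasurePreserving (fun s => (a s, c s)) ν (μ.prod μ)) :
    MeasurePreserving
      (fun q : ((Fin m → ℝ) × (Fin m → ℝ)) × S =>
        (update q.1.1 i (a q.2), update q.1.2 i (c q.2)))
      (((Measure.pi fun _ : Fin m => μ).prod (Measure.pi fun _ : Fin m => μ)).prod ν)
      ((Measure.pi fun _ : Fin m => μ).prod (Measure.pi fun _ : Fin m => μ)) := by
  have h1 : MeasurePreserving
      (Prod.map (id : ((Fin m → ℝ) × (Fin m → ℝ)) → _) (fun s => (a s, c s)))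
      (((Measure.pi fun _ : Fin m => μ).prod (Measure.pi fun _ : Fin m => μ)).prod ν)
      (((Measure.pi fun _ : Fin m => μ).prod (Measure.pi fun _ : Fin m => μ)).prod
        (μ.prod μ)) :=
    (MeasurePreserving.id _).prod h
  have h2 := mp_interchange (Measure.pi fun _ : Fin m => μ) (Measure.pi fun _ : Fin m => μ) μ μ
  have h3 := (mp_update μ i).prod (mp_update μ i)
  exact (h3.comp h2).comp h1

/-- The basic correlation integrand for a fixed selector pattern. -/
def Cfun (f g : (Fin m → ℝ) → ℝ) (b : Fin m → Bool)
    (p : (Fin m → ℝ) × (Fin m → ℝ)) : ℝ := f p.1 * g (merge b p)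

/-- The correlation coefficient for a fixed selector pattern. -/
def Cint (μ : Measure ℝ) [IsProbabilityMeasure μ] (f g : (Fin m → ℝ) → ℝ)
    (b : Fin m → Bool) : ℝ :=
  ∫ p, Cfun f g b p ∂((Measure.pi fun _ : Fin m => μ).prod (Measure.pi fun _ : Fin m => μ))

variable {f g : (Fin m → ℝ) → ℝ}

lemma measurable_Cfun (hf : Measurable f) (hg : Measurable g) (b : Fin m → Bool) :
    Measurable (Cfun f g b) :=
  (hf.comp measurable_fst).mul (hg.comp (measurable_merge b))

lemma integrable_Cfun (hf : Measurable f) (hg : Measurable g)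
    (hf2 : Integrable (fun v => (f v) ^ 2) (Measure.pi fun _ : Fin m => μ))
    (hg2 : Integrable (fun v => (g v) ^ 2) (Measure.pi fun _ : Fin m => μ))
    (b : Fin m → Bool) :
    Integrable (Cfun f g b)
      ((Measure.pi fun _ : Fin m => μ).prod (Measure.pi fun _ : Fin m => μ)) := by
  have h1 : MemLp (fun p : (Fin m → ℝ) × (Fin m → ℝ) => f p.1) 2
      ((Measure.pi fun _ : Fin m => μ).prod (Measure.pi fun _ : Fin m => μ)) :=
    (memL2_of_sq hf hf2).comp_measurePreserving mp_fst
  have h2 : MemLp (fun p : (Fin m → ℝ) × (Fin m → ℝ) => g (merge b p)) 2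
      ((Measure.pi fun _ : Fin m => μ).prod (Measure.pi fun _ : Fin m => μ)) :=
    (memL2_of_sq hg hg2).comp_measurePreserving (mp_merge μ b)
  exact integrable_mul_of_memL2 h1 h2

lemma merge_update (b : Fin m → Bool) (c : Bool) (p : (Fin m → ℝ) × (Fin m → ℝ))
    (i : Fin m) (u v : ℝ) :
    merge (update b i c) (update p.1 i u, update p.2 i v)
      = update (merge b p) i (if c then v else u) := by
  funext j
  by_cases hj : j = i
  · subst hj; simp [merge]
  · simp [merge, update_of_ne hj]

lemma key_b (hf : Measurable f) (hg : Measurable g)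
    (hf2 : Integrable (fun v => (f v) ^ 2) (Measure.pi fun _ : Fin m => μ))
    (hg2 : Integrable (fun v => (g v) ^ 2) (Measure.pi fun _ : Fin m => μ))
    (i : Fin m) (b : Fin m → Bool) :
    Integrable (fun q : ℝ × ((Fin m → ℝ) × (Fin m → ℝ)) =>
        Dop μ f i q.1 q.2.1 * Dop μ g i q.1 (merge b q.2))
      (μ.prod ((Measure.pi fun _ : Fin m => μ).prod (Measure.pi fun _ : Fin m => μ)))
    ∧ ∫ q, Dop μ f i q.1 q.2.1 * Dop μ g i q.1 (merge b q.2)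
        ∂(μ.prod ((Measure.pi fun _ : Fin m => μ).prod (Measure.pi fun _ : Fin m => μ)))
      = Cint μ f g (update b i false) - Cint μ f g (update b i true) := by
  set π : Measure (Fin m → ℝ) := Measure.pi fun _ : Fin m => μ with hπ
  have mpσ : MeasurePreserving
      (fun ω : (ℝ × ((Fin m → ℝ) × (Fin m → ℝ))) × (ℝ × ℝ) =>
        (ω.1.2, (ω.1.1, ω.2)))
      ((μ.prod (π.prod π)).prod (μ.prod μ)) ((π.prod π).prod (μ.prod (μ.prod μ))) := by
    have hs := (Measure.measurePreserving_swap (μ := μ) (ν := π.prod π)).prod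
      (MeasurePreserving.id (μ.prod μ))
    have ha := measurePreserving_prodAssoc (μa := (π.prod π)) (μb := μ) (μc := μ.prod μ)
    exact ha.comp hs
  have p1 : MeasurePreserving (fun s : ℝ × ℝ × ℝ => (s.1, s.2.1))
      (μ.prod (μ.prod μ)) (μ.prod μ) := (MeasurePreserving.id μ).prod mp_fst
  have p2 : MeasurePreserving (fun s : ℝ × ℝ × ℝ => (s.1, s.2.2))
      (μ.prod (μ.prod μ)) (μ.prod μ) := (MeasurePreserving.id μ).prod mp_snd
  have p3 : MeasurePreserving (fun s : ℝ × ℝ × ℝ => (s.2.1, s.1))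
      (μ.prod (μ.prod μ)) (μ.prod μ) := Measure.measurePreserving_swap.comp p1
  have p4 : MeasurePreserving (fun s : ℝ × ℝ × ℝ => (s.2.1, s.2.2))
      (μ.prod (μ.prod μ)) (μ.prod μ) := mp_snd
  have M1 := (mp_master μ i p1).comp mpσ
  have M2 := (mp_master μ i p2).comp mpσ
  have M3 := (mp_master μ i p3).comp mpσ
  have M4 := (mp_master μ i p4).comp mpσ
  have hb0 := integrable_Cfun μ hf hg hf2 hg2 (update b i false)
  have hb1 := integrable_Cfun μ hf hg hf2 hg2 (update b i true)
  have hm0 := (measurable_Cfun hf hg (update b i false)).aestronglyMeasurable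
    (μ := (π.prod π))
  have hm1 := (measurable_Cfun hf hg (update b i true)).aestronglyMeasurable
    (μ := (π.prod π))
  have hG1 : Integrable (fun ω : (ℝ × ((Fin m → ℝ) × (Fin m → ℝ))) × ℝ × ℝ =>
      Cfun f g (update b i false) (update ω.1.2.1 i ω.1.1, update ω.1.2.2 i ω.2.1))
      ((μ.prod (π.prod π)).prod (μ.prod μ)) := mp_integrable_comp M1 hm0 hb0
  have hG2 : Integrable (fun ω : (ℝ × ((Fin m → ℝ) × (Fin m → ℝ))) × ℝ × ℝ =>
      Cfun f g (update b i true) (update ω.1.2.1 i ω.1.1, update ω.1.2.2 i ω.2.2))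
      ((μ.prod (π.prod π)).prod (μ.prod μ)) := mp_integrable_comp M2 hm1 hb1
  have hG3 : Integrable (fun ω : (ℝ × ((Fin m → ℝ) × (Fin m → ℝ))) × ℝ × ℝ =>
      Cfun f g (update b i true) (update ω.1.2.1 i ω.2.1, update ω.1.2.2 i ω.1.1))
      ((μ.prod (π.prod π)).prod (μ.prod μ)) := mp_integrable_comp M3 hm1 hb1
  have hG4 : Integrable (fun ω : (ℝ × ((Fin m → ℝ) × (Fin m → ℝ))) × ℝ × ℝ =>
      Cfun f g (update b i true) (update ω.1.2.1 i ω.2.1, update ω.1.2.2 i ω.2.2))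
      ((μ.prod (π.prod π)).prod (μ.prod μ)) := mp_integrable_comp M4 hm1 hb1
  have hv1 : ∫ ω, Cfun f g (update b i false)
        (update ω.1.2.1 i ω.1.1, update ω.1.2.2 i ω.2.1)
        ∂((μ.prod (π.prod π)).prod (μ.prod μ)) = Cint μ f g (update b i false) :=
    mp_integral_comp M1 hm0
  have hv2 : ∫ ω, Cfun f g (update b i true)
        (update ω.1.2.1 i ω.1.1, update ω.1.2.2 i ω.2.2)
        ∂((μ.prod (π.prod π)).prod (μ.prod μ)) = Cint μ f g (update b i true) :=
    mp_integral_comp M2 hm1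
  have hv3 : ∫ ω, Cfun f g (update b i true)
        (update ω.1.2.1 i ω.2.1, update ω.1.2.2 i ω.1.1)
        ∂((μ.prod (π.prod π)).prod (μ.prod μ)) = Cint μ f g (update b i true) :=
    mp_integral_comp M3 hm1
  have hv4 : ∫ ω, Cfun f g (update b i true)
        (update ω.1.2.1 i ω.2.1, update ω.1.2.2 i ω.2.2)
        ∂((μ.prod (π.prod π)).prod (μ.prod μ)) = Cint μ f g (update b i true) :=
    mp_integral_comp M4 hm1
  set E : (ℝ × ((Fin m → ℝ) × (Fin m → ℝ))) × ℝ × ℝ → ℝ := fun ω =>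
    (f (update ω.1.2.1 i ω.1.1) - f (update ω.1.2.1 i ω.2.1)) *
    (g (update (merge b ω.1.2) i ω.1.1) - g (update (merge b ω.1.2) i ω.2.2)) with hE
  have hE_eq : E = fun ω =>
      Cfun f g (update b i false) (update ω.1.2.1 i ω.1.1, update ω.1.2.2 i ω.2.1)
      - Cfun f g (update b i true) (update ω.1.2.1 i ω.1.1, update ω.1.2.2 i ω.2.2)
      - Cfun f g (update b i true) (update ω.1.2.1 i ω.2.1, update ω.1.2.2 i ω.1.1)
      + Cfun f g (update b i true) (update ω.1.2.1 i ω.2.1, update ω.1.2.2 i ω.2.2) := by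
    funext ω
    have e1 := merge_update b false ω.1.2 i ω.1.1 ω.2.1
    have e2 := merge_update b true ω.1.2 i ω.1.1 ω.2.2
    have e3 := merge_update b true ω.1.2 i ω.2.1 ω.1.1
    have e4 := merge_update b true ω.1.2 i ω.2.1 ω.2.2
    simp only [Bool.false_eq_true, if_true, if_false] at e1 e2 e3 e4
    simp only [hE, Cfun, e1, e2, e3, e4]
    ring
  have hE_int : Integrable E ((μ.prod (π.prod π)).prod (μ.prod μ)) := by
    rw [hE_eq]
    exact ((hG1.sub hG2).sub hG3).add hG4
  have hG12 : Integrable (fun ω : (ℝ × ((Fin m → ℝ) × (Fin m → ℝ))) × ℝ × ℝ =>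
      Cfun f g (update b i false) (update ω.1.2.1 i ω.1.1, update ω.1.2.2 i ω.2.1)
      - Cfun f g (update b i true) (update ω.1.2.1 i ω.1.1, update ω.1.2.2 i ω.2.2))
      ((μ.prod (π.prod π)).prod (μ.prod μ)) := hG1.sub hG2
  have hG123 : Integrable (fun ω : (ℝ × ((Fin m → ℝ) × (Fin m → ℝ))) × ℝ × ℝ =>
      Cfun f g (update b i false) (update ω.1.2.1 i ω.1.1, update ω.1.2.2 i ω.2.1)
      - Cfun f g (update b i true) (update ω.1.2.1 i ω.1.1, update ω.1.2.2 i ω.2.2)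
      - Cfun f g (update b i true) (update ω.1.2.1 i ω.2.1, update ω.1.2.2 i ω.1.1))
      ((μ.prod (π.prod π)).prod (μ.prod μ)) := hG12.sub hG3
  have hEval : ∫ ω, E ω ∂((μ.prod (π.prod π)).prod (μ.prod μ))
      = Cint μ f g (update b i false) - Cint μ f g (update b i true) := by
    rw [hE_eq, integral_add hG123 hG4, integral_sub hG12 hG3, integral_sub hG1 hG2,
      hv1, hv2, hv3, hv4]
    ring
  have hfup : Integrable (fun q : (Fin m → ℝ) × ℝ => f (update q.1 i q.2)) (π.prod μ) :=
    mp_integrable_comp (mp_update μ i) hf.aestronglyMeasurable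
      ((memL2_of_sq hf hf2).integrable one_le_two)
  have hgup : Integrable (fun q : (Fin m → ℝ) × ℝ => g (update q.1 i q.2)) (π.prod μ) :=
    mp_integrable_comp (mp_update μ i) hg.aestronglyMeasurable
      ((memL2_of_sq hg hg2).integrable one_le_two)
  have hfae' : ∀ᵐ q ∂(μ.prod (π.prod π)),
      Integrable (fun y => f (update q.2.1 i y)) μ :=
    mp_ae_comp (mp_fst.comp mp_snd) hfup.prod_right_ae
  have hgae' : ∀ᵐ q ∂(μ.prod (π.prod π)),
      Integrable (fun z => g (update (merge b q.2) i z)) μ :=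
    mp_ae_comp ((mp_merge μ b).comp mp_snd) hgup.prod_right_ae
  have hkey : ∀ᵐ q ∂(μ.prod (π.prod π)),
      Dop μ f i q.1 q.2.1 * Dop μ g i q.1 (merge b q.2)
        = ∫ yz : ℝ × ℝ, E (q, yz) ∂(μ.prod μ) := by
    filter_upwards [hfae', hgae'] with q h1 h2
    have e1 : Dop μ f i q.1 q.2.1
        = ∫ y, (f (update q.2.1 i q.1) - f (update q.2.1 i y)) ∂μ := by
      rw [integral_sub (integrable_const _) h1, integral_const]
      simp [Dop]
    have e2 : Dop μ g i q.1 (merge b q.2)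
        = ∫ z, (g (update (merge b q.2) i q.1) - g (update (merge b q.2) i z)) ∂μ := by
      rw [integral_sub (integrable_const _) h2, integral_const]
      simp [Dop]
    rw [e1, e2, ← integral_prod_mul]
  have hIntLeft : Integrable (fun q => ∫ yz, E (q, yz) ∂(μ.prod μ)) (μ.prod (π.prod π)) :=
    hE_int.integral_prod_left
  constructor
  · exact hIntLeft.congr (hkey.mono fun q hq => hq.symm)
  · rw [integral_congr_ae hkey, ← MeasureTheory.integral_prod _ hE_int]
    exact hEval

lemma measurable_Yr : Measurable (Yr (m := m)) := by
  apply measurable_pi_lambda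
  intro j
  refine Measurable.ite ?_ ((measurable_pi_apply j).comp (measurable_fst.comp measurable_snd))
    ((measurable_pi_apply j).comp measurable_fst)
  have hc : Measurable fun w : (Fin m → ℝ) × (Fin m → ℝ) × (Fin m → Bool) => w.2.2 j :=
    (measurable_pi_apply j).comp (measurable_snd.comp measurable_snd)
  exact hc (measurableSet_singleton true)

lemma coInf_eq (hf : Measurable f) (hg : Measurable g)
    (hf2 : Integrable (fun v => (f v) ^ 2) (Measure.pi fun _ : Fin m => μ))
    (hg2 : Integrable (fun v => (g v) ^ 2) (Measure.pi fun _ : Fin m => μ))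
    (i : Fin m) {r : ℝ} (hr : r ∈ Set.Ioo (0 : ℝ) 1) :
    coInf μ f g i r = ∑ b : Fin m → Bool,
      wt b r * (Cint μ f g (update b i false) - Cint μ f g (update b i true)) := by
  set π : Measure (Fin m → ℝ) := Measure.pi fun _ : Fin m => μ with hπ
  have hK := fun b : Fin m → Bool => key_b μ hf hg hf2 hg2 i b
  have hAf : Measurable fun v : Fin m → ℝ => ∫ y, f (update v i y) ∂μ := by
    have h : StronglyMeasurable fun q : (Fin m → ℝ) × ℝ => f (update q.1 i q.2) :=
      (hf.comp measurable_update').stronglyMeasurable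
    exact h.integral_prod_right'.measurable
  have hAg : Measurable fun v : Fin m → ℝ => ∫ y, g (update v i y) ∂μ := by
    have h : StronglyMeasurable fun q : (Fin m → ℝ) × ℝ => g (update q.1 i q.2) :=
      (hg.comp measurable_update').stronglyMeasurable
    exact h.integral_prod_right'.measurable
  have hDf : ∀ x : ℝ, Measurable fun v : Fin m → ℝ => Dop μ f i x v := fun x =>
    (hf.comp measurable_update_left).sub hAf
  have hDg : ∀ x : ℝ, Measurable fun v : Fin m → ℝ => Dop μ g i x v := fun x =>
    (hg.comp measurable_update_left).sub hAg
  have hslice : ∀ᵐ x ∂μ, ∀ b : Fin m → Bool,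
      Integrable (fun p : (Fin m → ℝ) × (Fin m → ℝ) =>
        Dop μ f i x p.1 * Dop μ g i x (merge b p)) (π.prod π) := by
    rw [ae_all_iff]
    exact fun b => (hK b).1.prod_right_ae
  have hae : ∀ᵐ x ∂μ,
      (∫ w, Dop μ f i x (Y0 w) * Dop μ g i x (Yr w) ∂coupling μ m r)
        = ∑ b : Fin m → Bool, wt b r *
          ∫ p, Dop μ f i x p.1 * Dop μ g i x (merge b p) ∂(π.prod π) := by
    filter_upwards [hslice] with x hx
    exact integral_coupling μ hr.1.le hr.2.le
      (fun w => Dop μ f i x (Y0 w) * Dop μ g i x (Yr w))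
      (((hDf x).comp measurable_fst).mul ((hDg x).comp measurable_Yr))
      (fun b => hx b)
  calc coInf μ f g i r
      = ∫ x, (∑ b : Fin m → Bool, wt b r *
          ∫ p, Dop μ f i x p.1 * Dop μ g i x (merge b p) ∂(π.prod π)) ∂μ :=
        integral_congr_ae hae
    _ = ∑ b : Fin m → Bool, ∫ x, wt b r *
          (∫ p, Dop μ f i x p.1 * Dop μ g i x (merge b p) ∂(π.prod π)) ∂μ := by
        refine integral_finset_sum _ fun b _ => ?_
        exact ((hK b).1.integral_prod_left).const_mul _
    _ = ∑ b : Fin m → Bool,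
          wt b r * (Cint μ f g (update b i false) - Cint μ f g (update b i true)) := by
        refine Finset.sum_congr rfl fun b _ => ?_
        rw [integral_const_mul]
        congr 1
        exact ((MeasureTheory.integral_prod _ (hK b).1).symm).trans (hK b).2

lemma piSplit_self (i : Fin m) (c : Bool) (b' : {j : Fin m // j ≠ i} → Bool) :
    (Equiv.piSplitAt i fun _ => Bool).symm (c, b') i = c := by
  simp [Equiv.piSplitAt]

lemma piSplit_ne (i : Fin m) (c : Bool) (b' : {j : Fin m // j ≠ i} → Bool)
    {j : Fin m} (h : j ≠ i) :
    (Equiv.piSplitAt i fun _ => Bool).symm (c, b') j = b' ⟨j, h⟩ := by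
  simp [Equiv.piSplitAt, h]

lemma update_piSplit (i : Fin m) (c d : Bool) (b' : {j : Fin m // j ≠ i} → Bool) :
    update ((Equiv.piSplitAt i fun _ => Bool).symm (c, b')) i d
      = (Equiv.piSplitAt i fun _ => Bool).symm (d, b') := by
  funext j
  by_cases hj : j = i
  · subst hj; rw [update_self, piSplit_self]
  · rw [update_of_ne hj, piSplit_ne i c b' hj, piSplit_ne i d b' hj]

lemma prodErase_piSplit (i : Fin m) (c : Bool) (b' : {j : Fin m // j ≠ i} → Bool) (s : ℝ) :
    (∏ k ∈ Finset.univ.erase i,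
        (if (Equiv.piSplitAt i fun _ => Bool).symm (c, b') k then s else 1 - s))
      = ∏ j : {j : Fin m // j ≠ i}, (if b' j then s else 1 - s) := by
  rw [Finset.prod_subtype (Finset.univ.erase i) (p := fun j => j ≠ i)
    (by intro x; simp [Finset.mem_erase])]
  refine Finset.prod_congr rfl fun j _ => ?_
  rw [piSplit_ne i c b' j.2]

lemma wt_piSplit (i : Fin m) (c : Bool) (b' : {j : Fin m // j ≠ i} → Bool) (s : ℝ) :
    wt ((Equiv.piSplitAt i fun _ => Bool).symm (c, b')) s
      = (if c then s else 1 - s) *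
        ∏ j : {j : Fin m // j ≠ i}, (if b' j then s else 1 - s) := by
  rw [wt, ← Finset.mul_prod_erase Finset.univ _ (Finset.mem_univ i),
    piSplit_self, prodErase_piSplit]

lemma comb (i : Fin m) (r : ℝ) (C : (Fin m → Bool) → ℝ) :
    ∑ b : Fin m → Bool, wt b r * (C (update b i true) - C (update b i false))
      = ∑ b : Fin m → Bool, ((∏ k ∈ Finset.univ.erase i, (if b k then r else 1 - r)) *
          (if b i then 1 else -1)) * C b := by
  classical
  rw [← Equiv.sum_comp (Equiv.piSplitAt i fun _ => Bool).symm
      (fun b => wt b r * (C (update b i true) - C (update b i false))),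
    ← Equiv.sum_comp (Equiv.piSplitAt i fun _ => Bool).symm
      (fun b => ((∏ k ∈ Finset.univ.erase i, (if b k then r else 1 - r)) *
          (if b i then 1 else -1)) * C b)]
  rw [Fintype.sum_prod_type, Fintype.sum_prod_type, Fintype.sum_bool, Fintype.sum_bool,
    ← Finset.sum_add_distrib, ← Finset.sum_add_distrib]
  refine Finset.sum_congr rfl fun b' _ => ?_
  rw [update_piSplit, update_piSplit, update_piSplit, update_piSplit,
    wt_piSplit, wt_piSplit, prodErase_piSplit, prodErase_piSplit,
    piSplit_self, piSplit_self]
  simp only [if_true, if_false, Bool.false_eq_true]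
  ring

lemma hasDerivAt_wt (b : Fin m → Bool) (r : ℝ) :
    HasDerivAt (fun s => wt b s)
      (∑ j : Fin m, (∏ k ∈ Finset.univ.erase j, (if b k then r else 1 - r)) *
        (if b j then 1 else -1)) r := by
  have h : ∀ j ∈ Finset.univ, HasDerivAt
      (fun s : ℝ => if b j then s else 1 - s) (if b j then (1 : ℝ) else -1) r := by
    intro j _
    by_cases hb : b j
    · simp only [hb, if_true]; exact hasDerivAt_id' r
    · simpa [hb] using (hasDerivAt_id r).const_sub 1
  have h2 := HasDerivAt.fun_finsetProd h
  simp only [smul_eq_mul] at h2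
  exact h2

end Aux

end RussoMargulis

open RussoMargulis in
/-- for square-integrable `f, g` and `r ∈ (0,1)`,
`(d/dr) E[f(Y_0) g(Y_r)] = - ∑_{i=1}^m Inf_i^{f,g}(r)`. -/
theorem deriv_correlation_eq_neg_sum_coinfluence
    (m : ℕ) (μ : Measure ℝ) [IsProbabilityMeasure μ]
    (f g : (Fin m → ℝ) → ℝ) (hf : Measurable f) (hg : Measurable g)
    (hf2 : Integrable (fun v => (f v) ^ 2) (Measure.pi fun _ : Fin m => μ))
    (hg2 : Integrable (fun v => (g v) ^ 2) (Measure.pi fun _ : Fin m => μ))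
    (r : ℝ) (hr : r ∈ Set.Ioo (0 : ℝ) 1) :
    HasDerivAt (fun s => ∫ w, f (Y0 w) * g (Yr w) ∂coupling μ m s)
      (-∑ i : Fin m, coInf μ f g i r) r := by
  obtain ⟨hr0, hr1⟩ := hr
  have hP : HasDerivAt (fun s => ∑ b : Fin m → Bool, wt b s * Cint μ f g b)
      (∑ b : Fin m → Bool, (∑ j : Fin m,
        (∏ k ∈ Finset.univ.erase j, (if b k then r else 1 - r)) *
          (if b j then 1 else -1)) * Cint μ f g b) r := by
    refine HasDerivAt.fun_sum fun b _ => ?_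
    exact (hasDerivAt_wt b r).mul_const _
  have hev : (fun s => ∫ w, f (Y0 w) * g (Yr w) ∂coupling μ m s)
      =ᶠ[nhds r] (fun s => ∑ b : Fin m → Bool, wt b s * Cint μ f g b) := by
    filter_upwards [Ioo_mem_nhds hr0 hr1] with s hs
    exact integral_coupling μ hs.1.le hs.2.le (fun w => f (Y0 w) * g (Yr w))
      ((hf.comp measurable_fst).mul (hg.comp measurable_Yr))
      (fun b => integrable_Cfun μ hf hg hf2 hg2 b)
  have hD := hP.congr_of_eventuallyEq hev
  convert hD using 1
  · rfl
  · rfl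
  have hco : ∀ i : Fin m, coInf μ f g i r = ∑ b : Fin m → Bool,
      wt b r * (Cint μ f g (Function.update b i false) - Cint μ f g (Function.update b i true)) :=
    fun i => coInf_eq μ hf hg hf2 hg2 i ⟨hr0, hr1⟩
  calc -∑ i : Fin m, coInf μ f g i r
      = ∑ i : Fin m, ∑ b : Fin m → Bool,
          wt b r * (Cint μ f g (Function.update b i true) - Cint μ f g (Function.update b i false)) := by
        rw [← Finset.sum_neg_distrib]
        refine Finset.sum_congr rfl fun i _ => ?_
        rw [hco i, ← Finset.sum_neg_distrib]
        refine Finset.sum_congr rfl fun b _ => ?_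
        ring
    _ = ∑ i : Fin m, ∑ b : Fin m → Bool,
          ((∏ k ∈ Finset.univ.erase i, (if b k then r else 1 - r)) *
            (if b i then 1 else -1)) * Cint μ f g b := by
        exact Finset.sum_congr rfl fun i _ => comb i r _
    _ = ∑ b : Fin m → Bool, (∑ j : Fin m,
          (∏ k ∈ Finset.univ.erase j, (if b k then r else 1 - r)) *
            (if b j then 1 else -1)) * Cint μ f g b := by
        rw [Finset.sum_comm]
        exact Finset.sum_congr rfl fun b _ => (Finset.sum_mul _ _ _).symm
end
end

section
/- There exist constants C, c > 0 such that the following holds for every i, m ∈ ℤ and every n ∈ ℕ. Let T be the BLPP built from the Brownian motions {W_k}_{k∈ℤ}, and let T̃ be the BLPP built from the modified family {W̃_k} in which only the increment of W_m over [i, i+1] is replaced by an independent fresh standard Brownian motion X̃ on [0,1] (that is, W̃_k = W_k for k ≠ m, W̃_m(i+x) − W̃_m(i) = X̃(x) for x ∈ [0,1], and all other increments of W̃_m agree with those of W_m). Then for all r > 0, P( |T̃_𝟎^𝐧 − T_𝟎^𝐧| ≥ r ) ≤ C e^{−c r²}. -/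
/-!
Self-contained formalization of (static and dynamical) Brownian last passage percolation
(BLPP), following the conventions of the paper "Exceptional times when bigeodesics exist
in dynamical last passage percolation".

* The static environment is a family `{W_k}_{k ∈ ℤ}` of i.i.d. two-sided standard Brownian
  motions.
* A staircase from `(a, m)` to `(b, n)` (with `a ≤ b ∈ ℝ`, `m ≤ n ∈ ℤ`) is encoded by a
  nondecreasing sequence `z : ℤ → ℝ` with `z (m-1) = a` and `z n = b`; its weight is
  `∑_{i=m}^n (W_i(z_i) - W_i(z_{i-1}))`; the last passage time `lpt` is the supremal weight
  and a maximizing staircase is a geodesic (a.s. unique for fixed endpoints).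
* In the dynamical model, for each `(i,k) ∈ ℤ²` the Brownian increment
  `x ↦ W_k(x+i) - W_k(i)`, `x ∈ [0,1]`, is resampled to an independent fresh standard
  Brownian motion at the ring times of an independent rate-one Poisson clock.
-/

open MeasureTheory ProbabilityTheory Set
open scoped ENNReal NNReal

noncomputable section

namespace BLPP

/-- `z` encodes a staircase from `(a, m)` to `(b, n)`:  it is nondecreasing on
`[[m-1, n]]` with `z (m-1) = a` and `z n = b`. -/
def IsStaircase (a : ℝ) (m : ℤ) (b : ℝ) (n : ℤ) (z : ℤ → ℝ) : Prop :=
  m ≤ n ∧ z (m - 1) = a ∧ z n = b ∧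
    ∀ i j : ℤ, m - 1 ≤ i → i ≤ j → j ≤ n → z i ≤ z j

/-- The weight `∑_{i=m}^n (W_i(z_i) - W_i(z_{i-1}))` of a staircase. -/
def wgt (W : ℤ → ℝ → ℝ) (m n : ℤ) (z : ℤ → ℝ) : ℝ :=
  ∑ i ∈ Finset.Icc m n, (W i (z i) - W i (z (i - 1)))

/-- The Brownian last passage time `T_{(a,m)}^{(b,n)}`. -/
def lpt (W : ℤ → ℝ → ℝ) (a : ℝ) (m : ℤ) (b : ℝ) (n : ℤ) : ℝ :=
  sSup {w | ∃ z, IsStaircase a m b n z ∧ w = wgt W m n z}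

/-- `z` is a geodesic (weight-maximizing staircase) from `(a,m)` to `(b,n)`. -/
def IsGeodesic (W : ℤ → ℝ → ℝ) (a : ℝ) (m : ℤ) (b : ℝ) (n : ℤ) (z : ℤ → ℝ) : Prop :=
  IsStaircase a m b n z ∧ wgt W m n z = lpt W a m b n

/-- The trace of a staircase in the plane: the union of its horizontal segments
`[z_{i-1}, z_i] × {i}` and vertical segments `{z_i} × [i, i+1]`. -/
def trace (m n : ℤ) (z : ℤ → ℝ) : Set (ℝ × ℝ) :=
  {p | ∃ i : ℤ, m ≤ i ∧ i ≤ n ∧ p.2 = (i : ℝ) ∧ z (i - 1) ≤ p.1 ∧ p.1 ≤ z i} ∪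
  {p | ∃ i : ℤ, m ≤ i ∧ i ≤ n - 1 ∧ p.1 = z i ∧ (i : ℝ) ≤ p.2 ∧ p.2 ≤ (i : ℝ) + 1}

/-- The union of the traces of all geodesics from `(a,m)` to `(b,n)`; by a.s. uniqueness
this is a.s. the trace of the geodesic. -/
def geodTrace (W : ℤ → ℝ → ℝ) (a : ℝ) (m : ℤ) (b : ℝ) (n : ℤ) : Set (ℝ × ℝ) :=
  {p | ∃ z, IsGeodesic W a m b n z ∧ p ∈ trace m n z}

/-- The coarse-graining of a planar set:
`Coarse(K) = {(i,m) ∈ ℤ² : ([i,i+1] × {m}) ∩ K ≠ ∅}`. -/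
def coarse (K : Set (ℝ × ℝ)) : Set (ℤ × ℤ) :=
  {im | ∃ u : ℝ, (im.1 : ℝ) ≤ u ∧ u ≤ (im.1 : ℝ) + 1 ∧ (u, (im.2 : ℝ)) ∈ K}

/-- `ℳ_p^q = {(i,m) ∈ ℤ² : ∃ w ∈ [i,i+1] × {m}, p ≤ w ≤ q}`. -/
def mGrid (p q : ℝ × ℝ) : Set (ℤ × ℤ) :=
  {im | ∃ u : ℝ, (im.1 : ℝ) ≤ u ∧ u ≤ (im.1 : ℝ) + 1 ∧
    p.1 ≤ u ∧ u ≤ q.1 ∧ p.2 ≤ (im.2 : ℝ) ∧ (im.2 : ℝ) ≤ q.2}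

/-- `IsStaticBLPP P W` expresses that under `P` the family `W` consists of i.i.d. two-sided
standard Brownian motions: static Brownian LPP. -/
structure IsStaticBLPP {Ω : Type} [MeasurableSpace Ω] (P : Measure Ω)
    (W : ℤ → Ω → ℝ → ℝ) : Prop where
  prob : IsProbabilityMeasure P
  meas : ∀ k u, Measurable fun x => W k x u
  cont : ∀ k x, Continuous (W k x)
  start : ∀ k x, W k x 0 = 0
  /-- Gaussian increments of the right variance … -/
  gauss : ∀ k s t, ∀ h : s ≤ t,
    P.map (fun x => W k x t - W k x s) = gaussianReal 0 ⟨t - s, sub_nonneg.mpr h⟩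
  /-- … independent over disjoint time intervals, … -/
  indep_incr : ∀ (k : ℤ) (s : ℕ → ℝ), Monotone s →
    iIndepFun (fun i x => W k x (s (i + 1)) - W k x (s i)) P
  /-- … and the lines are mutually independent. -/
  indep_lines : iIndepFun (fun k : ℤ => fun x => fun u : ℝ => W k x u) P

/-- `IsDynBLPP P W clock` expresses that `(W t)_{t ∈ ℝ}` is dynamical Brownian LPP: each
`(i,k) ∈ ℤ²` carries an independent rate-one Poisson clock (with ring times `clock (i,k)`),
and at each ring the Brownian increment `u ↦ W_k(i+u) - W_k(i)`, `u ∈ [0,1]`, is replaced by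
an independent fresh standard Brownian motion on `[0,1]`.  For each fixed `t` the slice
`W t` is a family of i.i.d. two-sided standard Brownian motions and the process is
stationary in `t`. -/
structure IsDynBLPP {Ω : Type} [MeasurableSpace Ω] (P : Measure Ω)
    (W : ℝ → ℤ → Ω → ℝ → ℝ) (clock : ℤ × ℤ → Ω → Set ℝ) : Prop where
  prob : IsProbabilityMeasure P
  /-- every time slice is a static Brownian LPP environment; -/
  slice : ∀ t : ℝ, IsStaticBLPP P (W t)
  /-- each clock rings finitely often in bounded intervals, … -/
  clock_fin : ∀ ik x s t, (clock ik x ∩ Set.Ioc s t).Finite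
  /-- … its ring counts are Poisson with mean the length of the interval, … -/
  clock_law : ∀ ik s t, s ≤ t → ∀ j : ℕ,
    P {x | (clock ik x ∩ Set.Ioc s t).ncard = j}
      = ENNReal.ofReal (Real.exp (-(t - s)) * (t - s) ^ j / j.factorial)
  /-- … and ring counts over disjoint space-time blocks are independent. -/
  clock_indep : ∀ (J : ℕ) (site : Fin J → ℤ × ℤ) (a b : Fin J → ℝ),
    (∀ i j, i ≠ j → site i ≠ site j ∨ Set.Ioc (a i) (b i) ∩ Set.Ioc (a j) (b j) = ∅) →
    iIndepFun
      (fun i x => (clock (site i) x ∩ Set.Ioc (a i) (b i)).ncard) P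
  /-- The increment at `(i,k)` only changes when the clock at `(i,k)` rings. -/
  incr_const : ∀ (ik : ℤ × ℤ) x s t, s ≤ t → clock ik x ∩ Set.Ioc s t = ∅ →
    ∀ u ∈ Set.Icc (0 : ℝ) 1,
      W t ik.2 x ((ik.1 : ℝ) + u) - W t ik.2 x (ik.1 : ℝ)
        = W s ik.2 x ((ik.1 : ℝ) + u) - W s ik.2 x (ik.1 : ℝ)
  /-- The increment trajectories at distinct `(i,k)` are independent. -/
  incr_indep : iIndepFun
    (fun ik : ℤ × ℤ => fun x => fun p : ℝ × Set.Icc (0 : ℝ) 1 =>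
      W p.1 ik.2 x ((ik.1 : ℝ) + (p.2 : ℝ)) - W p.1 ik.2 x (ik.1 : ℝ)) P
  /-- The dynamics is stationary in time. -/
  stationary : ∀ s : ℝ,
    P.map (fun x => fun p : ℝ × ℤ × ℝ => W (p.1 + s) p.2.1 x p.2.2)
      = P.map (fun x => fun p : ℝ × ℤ × ℝ => W p.1 p.2.1 x p.2.2)
  /-- When a clock rings, the corresponding increment is resampled to an independent fresh
  standard Brownian motion on `[0,1]`, independently of the past of the process. -/
  refresh : ∀ (ik : ℤ × ℤ) (s t : ℝ), s < t → ∀ E : Set Ω,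
    MeasurableSet[MeasurableSpace.comap
      (fun x => fun p : {r : ℝ // r ≤ s} × ℤ × ℝ => W p.1.1 p.2.1 x p.2.2) inferInstance] E →
    ∀ (J : ℕ) (u : Fin J → ℝ) (B : Fin J → Set ℝ),
      (∀ a, u a ∈ Set.Icc (0 : ℝ) 1) → (∀ a, MeasurableSet (B a)) →
      P (E ∩ {x | (clock ik x ∩ Set.Ioc s t).Nonempty} ∩
          {x | ∀ a, W t ik.2 x ((ik.1 : ℝ) + u a) - W t ik.2 x (ik.1 : ℝ) ∈ B a})
        = P (E ∩ {x | (clock ik x ∩ Set.Ioc s t).Nonempty}) *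
            P {x | ∀ a, W 0 0 x (u a) ∈ B a}

/-- The environment just before time `r` (the dynamics is piecewise constant in time, so
this is the left limit in the time variable). -/
def leftW (W : ℝ → ℤ → ℝ → ℝ) (r : ℝ) : ℤ → ℝ → ℝ :=
  fun k u => Function.leftLim (fun s => W s k u) r

/-- A bi-infinite staircase in the plane: a maximal chain for the coordinatewise order.
`IsBigeodesic W Ξ` states moreover that every finite segment of `Ξ` between points of
`ℝ × ℤ` is a geodesic: a bigeodesic for the BLPP with environment `W`. -/
def IsBigeodesic (W : ℤ → ℝ → ℝ) (Ξ : Set (ℝ × ℝ)) : Prop :=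
  IsMaxChain (fun p q : ℝ × ℝ => p ≤ q) Ξ ∧
  ∀ (a b : ℝ) (m n : ℤ), (a, (m : ℝ)) ∈ Ξ → (b, (n : ℝ)) ∈ Ξ → a ≤ b → m ≤ n →
    ∃ z : ℤ → ℝ, IsStaircase a m b n z ∧ trace m n z ⊆ Ξ ∧ wgt W m n z = lpt W a m b n

/-- A trivial bi-infinite path: one which is entirely horizontal or entirely vertical. -/
def IsTrivialPath (Ξ : Set (ℝ × ℝ)) : Prop :=
  (∃ c : ℝ, Ξ ⊆ {p | p.2 = c}) ∨ ∃ c : ℝ, Ξ ⊆ {p | p.1 = c}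

/-- An (unbounded) set `A ⊆ ℝ²` is `θ`-directed if along every sequence of points of `A`
whose second coordinates tend to infinity in absolute value, the ratio of the coordinates
tends to `θ`. -/
def ThetaDirected (θ : ℝ) (A : Set (ℝ × ℝ)) : Prop :=
  ∀ u : ℕ → ℝ × ℝ, (∀ j, u j ∈ A) →
    Filter.Tendsto (fun j => |(u j).2|) Filter.atTop Filter.atTop →
    Filter.Tendsto (fun j => (u j).1 / (u j).2) Filter.atTop (nhds θ)

/-- The hitset `HitSet_{K₁}^{K₂,[s,t]}(K)`: the union, over all `p ∈ K₁ ∩ (ℝ × ℤ)`,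
`q ∈ K₂ ∩ (ℝ × ℤ)`, all times `r ∈ [s,t]` and all geodesics `Γ_p^{q,r}`, of
`Coarse(Γ_p^{q,r} ∩ K)`. -/
def hitSet (W : ℝ → ℤ → ℝ → ℝ) (K₁ K₂ K : Set (ℝ × ℝ)) (s t : ℝ) : Set (ℤ × ℤ) :=
  {im | ∃ r ∈ Set.Icc s t, ∃ (a b : ℝ) (m n : ℤ),
    (a, (m : ℝ)) ∈ K₁ ∧ (b, (n : ℝ)) ∈ K₂ ∧
    ∃ z, IsGeodesic (W r) a m b n z ∧
      ∃ u : ℝ, (im.1 : ℝ) ≤ u ∧ u ≤ (im.1 : ℝ) + 1 ∧ (u, (im.2 : ℝ)) ∈ trace m n z ∩ K}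

/-- `𝒯_p^{q,[s,t]}`: the set of times in `[s,t]` at which some clock in `ℳ_p^q` rings. -/
def resampleTimes (clock : ℤ × ℤ → Set ℝ) (p q : ℝ × ℝ) (s t : ℝ) : Set ℝ :=
  {r | r ∈ Set.Icc s t ∧ ∃ im ∈ mGrid p q, r ∈ clock im}

/-- The number of geodesic switches
`Switch_p^{q,[s,t]}(K) = ∑_{r ∈ 𝒯_p^{q,[s,t]}} |Coarse(K ∩ Γ_p^{q,r}) \ Coarse(K ∩ Γ_p^{q,r⁻})|`,
where `Γ_p^{q,r⁻}`/`Γ_p^{q,r}` are the geodesics just before/after the resampling at `r`. -/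
def switch (W : ℝ → ℤ → ℝ → ℝ) (clock : ℤ × ℤ → Set ℝ) (a : ℝ) (m : ℤ) (b : ℝ) (n : ℤ)
    (K : Set (ℝ × ℝ)) (s t : ℝ) : ℝ :=
  ∑ᶠ r ∈ resampleTimes clock (a, (m : ℝ)) (b, (n : ℝ)) s t,
    (((coarse (K ∩ geodTrace (W r) a m b n) \
       coarse (K ∩ geodTrace (leftW W r) a m b n)).ncard : ℝ))

/-- The vertical extent `|A|_vert` of a planar set. -/
def vertExtent (A : Set (ℝ × ℝ)) : ℝ :=
  sInf {d | ∃ a b : ℝ, d = b - a ∧ ∀ p ∈ A, a ≤ p.2 ∧ p.2 ≤ b}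

/-- `Loc^{l₁,l₂,m}(A)`: the set `A` is contained in `ℝ × [m-l₂, m+l₂]` and its vertical
extent lies in `[l₁, l₂]`. -/
def Loc (l₁ l₂ : ℝ) (m : ℤ) (A : Set (ℝ × ℝ)) : Prop :=
  (∀ p ∈ A, (m : ℝ) - l₂ ≤ p.2 ∧ p.2 ≤ (m : ℝ) + l₂) ∧
    l₁ ≤ vertExtent A ∧ vertExtent A ≤ l₂

/-- The horizontal segment `[m - |m|^{2/3}, m + |m|^{2/3}] × {m}`. -/
def Lseg (m : ℤ) : Set (ℝ × ℝ) :=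
  {p | p.2 = (m : ℝ) ∧ (m : ℝ) - |(m : ℝ)| ^ ((2 : ℝ) / 3) ≤ p.1 ∧
    p.1 ≤ (m : ℝ) + |(m : ℝ)| ^ ((2 : ℝ) / 3)}

/-- The region `ℝ × ([a,b] ∩ ℤ)` of the plane: points on integer levels in `[a, b]`. -/
def levelBand (a b : ℝ) : Set (ℝ × ℝ) :=
  {p | (∃ m : ℤ, p.2 = (m : ℝ)) ∧ a ≤ p.2 ∧ p.2 ≤ b}

end BLPP

namespace BLPP

/-- `IsFreshBM P fresh W`: under `P`, `fresh` is a standard Brownian motion on `[0,1]`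
independent of the whole Brownian family `W`. -/
structure IsFreshBM {Ω : Type} [MeasurableSpace Ω] (P : Measure Ω)
    (fresh : Ω → ℝ → ℝ) (W : ℤ → Ω → ℝ → ℝ) : Prop where
  meas : ∀ u, Measurable fun x => fresh x u
  cont : ∀ x, Continuous (fresh x)
  start : ∀ x, fresh x 0 = 0
  gauss : ∀ s t, 0 ≤ s → ∀ h : s ≤ t, t ≤ 1 →
    P.map (fun x => fresh x t - fresh x s) = gaussianReal 0 ⟨t - s, sub_nonneg.mpr h⟩
  incr_indep : ∀ s : ℕ → ℝ, Monotone s → (∀ i, s i ∈ Set.Icc (0 : ℝ) 1) →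
    iIndepFun (fun i x => fresh x (s (i + 1)) - fresh x (s i)) P
  indep : IndepFun (fun x => fresh x) (fun x => fun p : ℤ × ℝ => W p.1 x p.2) P

/-- Replace the increment of `w` over `[i, i+1]` by the path `f` (run over `[0,1]`), leaving
all other increments of `w` unchanged. -/
def tweak (w : ℝ → ℝ) (i : ℤ) (f : ℝ → ℝ) : ℝ → ℝ := fun u =>
  if u ≤ (i : ℝ) then w u
  else if u ≤ (i : ℝ) + 1 then w i + f (u - i)
  else w u - w ((i : ℝ) + 1) + w i + f 1

end BLPP

namespace BLPP
open Real Filter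

lemma gauss_tail (v : ℝ≥0) (hv : 0 < v) (b : ℝ) (hb : 0 ≤ b) :
    gaussianReal 0 v {y | b ≤ |y|} ≤ ENNReal.ofReal (2 * rexp (-b^2 / (4*v))) := by
  have hvne : v ≠ 0 := hv.ne'
  have h2vne : (2*v : ℝ≥0) ≠ 0 := by positivity
  have hvpos : (0:ℝ) < (v:ℝ) := hv
  rw [gaussianReal_apply 0 hvne]
  have key : ∀ x ∈ {y : ℝ | b ≤ |y|}, gaussianPDF 0 v x ≤
      ENNReal.ofReal (Real.sqrt 2 * rexp (-b^2/(4*v))) * gaussianPDF 0 (2*v) x := by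
    intro x hx
    rw [gaussianPDF, gaussianPDF, ← ENNReal.ofReal_mul (by positivity)]
    apply ENNReal.ofReal_le_ofReal
    unfold gaussianPDFReal
    have hc : ((2*v : ℝ≥0) : ℝ) = 2 * (v:ℝ) := by push_cast; ring
    rw [hc]
    have hsqrt : Real.sqrt (2 * π * (2*(v:ℝ))) = Real.sqrt 2 * Real.sqrt (2*π*v) := by
      rw [← Real.sqrt_mul (by norm_num)]
      ring_nf
    rw [hsqrt]
    have h2 : (0:ℝ) < Real.sqrt 2 := by positivity
    have hs : (0:ℝ) < Real.sqrt (2*π*v) := by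
      apply Real.sqrt_pos.mpr; positivity
    rw [mul_inv]
    have : Real.sqrt 2 * rexp (-b^2/(4*v)) * ((Real.sqrt 2)⁻¹ * (Real.sqrt (2*π*v))⁻¹ * rexp (-(x-0)^2/(2*(2*v))))
        = (Real.sqrt (2*π*v))⁻¹ * (rexp (-b^2/(4*v)) * rexp (-(x-0)^2/(4*v))) := by
      field_simp
      ring_nf
    rw [this, ← Real.exp_add]
    -- now reduce to exponent comparison
    have hbx : b ≤ |x| := hx
    have hx2 : b^2 ≤ x^2 := by nlinarith [sq_abs x, abs_nonneg x]
    have hexp : rexp (-(x-0)^2/(2*(v:ℝ))) ≤ rexp (-b^2/(4*(v:ℝ)) + -(x-0)^2/(4*(v:ℝ))) := by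
      rw [Real.exp_le_exp, sub_zero, ← add_div,
        div_le_div_iff₀ (by positivity) (by positivity)]
      nlinarith
    exact mul_le_mul_of_nonneg_left hexp (inv_nonneg.mpr hs.le)
  calc ∫⁻ x in {y : ℝ | b ≤ |y|}, gaussianPDF 0 v x
      ≤ ∫⁻ x in {y : ℝ | b ≤ |y|}, ENNReal.ofReal (Real.sqrt 2 * rexp (-b^2/(4*v))) * gaussianPDF 0 (2*v) x := by
        apply setLIntegral_mono (by
          exact (measurable_const.mul (measurable_gaussianPDF _ _))) key
    _ ≤ ∫⁻ x, ENNReal.ofReal (Real.sqrt 2 * rexp (-b^2/(4*v))) * gaussianPDF 0 (2*v) x :=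
        setLIntegral_le_lintegral _ _
    _ = ENNReal.ofReal (Real.sqrt 2 * rexp (-b^2/(4*v))) * ∫⁻ x, gaussianPDF 0 (2*v) x := by
        rw [lintegral_const_mul _ (measurable_gaussianPDF _ _)]
    _ ≤ ENNReal.ofReal (2 * rexp (-b^2/(4*v))) := by
        rw [lintegral_gaussianPDF_eq_one 0 h2vne, mul_one]
        apply ENNReal.ofReal_le_ofReal
        have h22 : Real.sqrt 2 ≤ 2 := by
          nlinarith [Real.sq_sqrt (by norm_num : (0:ℝ) ≤ 2), Real.sqrt_nonneg 2]
        have := Real.exp_pos (-b^2/(4*(v:ℝ)))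
        nlinarith


lemma chain_incl (h : ℝ → ℝ) (hc : Continuous h) (h0 : h 0 = 0) (a : ℝ) (ha : 0 < a)
    (s : ℝ) (hs : s ∈ Icc (0:ℝ) 1) (hval : a ≤ |h s|) :
    ∃ (j k : ℕ), k < 2^j ∧ a/2 * ((3/4:ℝ)^j / 8) ≤ |h ((k+1)/2^j) - h ((k:ℝ)/2^j)| := by
  by_contra hcon
  push_neg at hcon
  -- all dyadic increments are small
  have key : ∀ n : ℕ, ∀ k : ℕ, k ≤ 2^n →
      |h ((k:ℝ)/2^n)| ≤ ∑ j ∈ Finset.range (n+1), a/2 * ((3/4:ℝ)^j / 8) := by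
    intro n
    induction n with
    | zero =>
      intro k hk
      interval_cases k
      · have e0 : ((0:ℕ):ℝ)/2^(0:ℕ) = 0 := by norm_num
        rw [e0, h0, abs_zero]
        positivity
      · have h00 := hcon 0 0 (by norm_num)
        have e1 : (((0:ℕ):ℝ)+1)/2^(0:ℕ) = 1 := by norm_num
        have e0 : ((0:ℕ):ℝ)/2^(0:ℕ) = 0 := by norm_num
        rw [e1, e0, h0, sub_zero] at h00
        have e2 : ((1:ℕ):ℝ)/2^(0:ℕ) = 1 := by norm_num
        rw [e2, Finset.sum_range_one]
        exact h00.le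
    | succ n ih =>
      intro k hk
      have hpow2 : 2^(n+1) = 2 * 2^n := by rw [pow_succ]; ring
      rcases Nat.even_or_odd k with ⟨k', hk'⟩ | ⟨k', hk'⟩
      · -- k = k' + k'
        have hk'le : k' ≤ 2^n := by omega
        have hcast : ((k:ℝ))/2^(n+1) = (k':ℝ)/2^n := by
          have hkr : (k:ℝ) = 2 * (k':ℝ) := by rw [hk']; push_cast; ring
          rw [hkr, pow_succ]
          field_simp
        rw [hcast]
        refine (ih k' hk'le).trans ?_
        apply Finset.sum_le_sum_of_subset_of_nonneg (Finset.range_subset_range.mpr (by omega))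
        intro j _ _
        positivity
      · -- k = 2k' + 1
        have hklt : k < 2^(n+1) := by omega
        have hk'le : k' ≤ 2^n := by omega
        have h2k'lt : 2*k' < 2^(n+1) := by omega
        have hinc := hcon (n+1) (2*k') h2k'lt
        have e1 : (((2*k' : ℕ):ℝ) + 1)/2^(n+1) = (k:ℝ)/2^(n+1) := by
          rw [hk']; push_cast; ring
        have e0 : ((2*k' : ℕ):ℝ)/2^(n+1) = (k':ℝ)/2^n := by
          push_cast
          rw [pow_succ]
          field_simp
        rw [e1, e0] at hinc
        have h1 : |h ((k:ℝ)/2^(n+1))| ≤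
            |h ((k:ℝ)/2^(n+1)) - h ((k':ℝ)/2^n)| + |h ((k':ℝ)/2^n)| := by
          have := abs_add_le (h ((k:ℝ)/2^(n+1)) - h ((k':ℝ)/2^n)) (h ((k':ℝ)/2^n))
          simpa using this
        refine h1.trans ?_
        rw [Finset.sum_range_succ]
        have := ih k' hk'le
        linarith
  -- sum bound
  have sumb : ∀ n : ℕ, ∑ j ∈ Finset.range (n+1), a/2 * ((3/4:ℝ)^j / 8) ≤ a/4 := by
    intro n
    have : ∑ j ∈ Finset.range (n+1), a/2 * ((3/4:ℝ)^j / 8)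
        = (a/16) * ∑ j ∈ Finset.range (n+1), (3/4:ℝ)^j := by
      rw [Finset.mul_sum]; apply Finset.sum_congr rfl; intro j _; ring
    rw [this, geom_sum_eq (by norm_num) (n+1)]
    have h34 : (0:ℝ) ≤ (3/4:ℝ)^(n+1) := by positivity
    have : ((3/4:ℝ)^(n+1) - 1)/((3/4:ℝ) - 1) = 4 * (1 - (3/4:ℝ)^(n+1)) := by ring
    rw [this]
    nlinarith
  -- dyadic approximants
  obtain ⟨hs0, hs1⟩ := hs
  set u : ℕ → ℝ := fun n => (⌊s * 2^n⌋₊ : ℝ)/2^n with hu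
  have hub : ∀ n, |h (u n)| ≤ a/4 := by
    intro n
    exact (key n ⌊s * 2^n⌋₊ (by
      have : s * 2^n ≤ 2^n := by nlinarith [pow_pos (by norm_num : (0:ℝ)<2) n]
      calc ⌊s * 2^n⌋₊ ≤ ⌊(2:ℝ)^n⌋₊ := Nat.floor_le_floor this
        _ = 2^n := by rw [← Nat.cast_ofNat (n := 2), ← Nat.cast_pow, Nat.floor_natCast]
      )).trans (sumb n)
  have hlo : ∀ n, s - (1/2:ℝ)^n ≤ u n := by
    intro n
    have h2n : (0:ℝ) < 2^n := by positivity
    have := Nat.lt_floor_add_one (s * 2^n)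
    rw [hu]
    rw [sub_le_iff_le_add, div_add' _ _ _ h2n.ne']
    rw [le_div_iff₀ h2n]
    have : s * 2^n < (⌊s * 2^n⌋₊ : ℝ) + 1 := Nat.lt_floor_add_one _
    have hpow : (1/2:ℝ)^n * 2^n = 1 := by
      rw [div_pow, one_pow, one_div, inv_mul_cancel₀ (by positivity : (2:ℝ)^n ≠ 0)]
    nlinarith
  have hhi : ∀ n, u n ≤ s := by
    intro n
    have h2n : (0:ℝ) < 2^n := by positivity
    rw [hu, div_le_iff₀ h2n]
    exact Nat.floor_le (by positivity)
  have hulim : Tendsto u atTop (nhds s) := by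
    have hl : Tendsto (fun n => s - (1/2:ℝ)^n) atTop (nhds s) := by
      have := tendsto_pow_atTop_nhds_zero_of_lt_one (by norm_num : (0:ℝ) ≤ 1/2) (by norm_num : (1/2:ℝ) < 1)
      simpa using (tendsto_const_nhds.sub this)
    exact tendsto_of_tendsto_of_tendsto_of_le_of_le hl tendsto_const_nhds hlo hhi
  have : |h s| ≤ a/4 := by
    have h1 : Tendsto (fun n => |h (u n)|) atTop (nhds (|h s|)) :=
      (continuous_abs.tendsto _).comp ((hc.tendsto s).comp hulim)
    exact le_of_tendsto h1 (Filter.Eventually.of_forall hub)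
  linarith

lemma sup_tail {Ω : Type} [MeasurableSpace Ω] (P : Measure Ω) [IsProbabilityMeasure P]
    (Y : Ω → ℝ → ℝ)
    (meas : ∀ u : ℝ, Measurable fun x => Y x u)
    (cont : ∀ x, Continuous (Y x))
    (start : ∀ x, Y x 0 = 0)
    (gauss : ∀ s t : ℝ, 0 ≤ s → ∀ h : s ≤ t, t ≤ 1 →
      P.map (fun x => Y x t - Y x s) = gaussianReal 0 ⟨t - s, sub_nonneg.mpr h⟩)
    (a : ℝ) (ha : 0 < a) :
    P {x | ∃ s ∈ Icc (0:ℝ) 1, a ≤ |Y x s|} ≤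
      ENNReal.ofReal (1000000 * rexp (-a^2 / 1024)) := by
  by_cases hsmall : rexp (-a^2/8192) ≤ 1/4
  swap
  · -- small a : trivial bound
    push_neg at hsmall
    refine (prob_le_one).trans ?_
    rw [show (1:ℝ≥0∞) = ENNReal.ofReal 1 by simp]
    apply ENNReal.ofReal_le_ofReal
    have h8 : rexp (-a^2/1024) = (rexp (-a^2/8192))^8 := by
      rw [← Real.exp_nat_mul]
      congr 1
      push_cast
      ring
    have hq : (0:ℝ) < rexp (-a^2/8192) := Real.exp_pos _
    have hpw : ((1:ℝ)/4)^8 < (rexp (-a^2/8192))^8 :=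
      pow_lt_pow_left₀ hsmall (by norm_num) (by norm_num)
    rw [h8]
    nlinarith
  -- main case
  set E : ℕ → ℕ → Set Ω := fun j k =>
    {x | a/2 * ((3/4:ℝ)^j / 8) ≤ |Y x (((k:ℝ)+1)/2^j) - Y x ((k:ℝ)/2^j)|} with hE
  have hincl : {x | ∃ s ∈ Icc (0:ℝ) 1, a ≤ |Y x s|} ⊆
      ⋃ (j : ℕ), ⋃ (k : Fin (2^j)), E j (k : ℕ) := by
    intro x hx
    obtain ⟨s, hs, hval⟩ := hx
    obtain ⟨j, k, hk, hineq⟩ := chain_incl (Y x) (cont x) (start x) a ha s hs hval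
    exact mem_iUnion.mpr ⟨j, mem_iUnion.mpr ⟨⟨k, hk⟩, hineq⟩⟩
  have hEbound : ∀ (j k : ℕ), k < 2^j →
      P (E j k) ≤ ENNReal.ofReal (2 * rexp (-(a^2 * (9/8:ℝ)^j) / 1024)) := by
    intro j k hk
    have h2j : (0:ℝ) < 2^j := by positivity
    have h0k : (0:ℝ) ≤ (k:ℝ)/2^j := by positivity
    have hle : (k:ℝ)/2^j ≤ ((k:ℝ)+1)/2^j := by gcongr; linarith
    have ht1 : ((k:ℝ)+1)/2^j ≤ 1 := by
      rw [div_le_one h2j]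
      have : ((k:ℝ)+1) ≤ ((2^j : ℕ) : ℝ) := by
        exact_mod_cast Nat.succ_le_of_lt hk
      simpa using this
    have hmap := gauss ((k:ℝ)/2^j) (((k:ℝ)+1)/2^j) h0k hle ht1
    have hZ : Measurable (fun x => Y x (((k:ℝ)+1)/2^j) - Y x ((k:ℝ)/2^j)) :=
      (meas _).sub (meas _)
    have hset : MeasurableSet {y : ℝ | a/2 * ((3/4:ℝ)^j / 8) ≤ |y|} :=
      measurableSet_le measurable_const measurable_abs
    have hPE : P (E j k)
        = (P.map (fun x => Y x (((k:ℝ)+1)/2^j) - Y x ((k:ℝ)/2^j)))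
            {y | a/2 * ((3/4:ℝ)^j / 8) ≤ |y|} := by
      rw [Measure.map_apply hZ hset]
      rfl
    rw [hPE, hmap]
    have hb : (0:ℝ) ≤ a/2 * ((3/4:ℝ)^j / 8) := by positivity
    have hvpos : (0 : ℝ≥0) < ⟨((k:ℝ)+1)/2^j - (k:ℝ)/2^j, sub_nonneg.mpr hle⟩ := by
      apply NNReal.coe_pos.mp
      show (0:ℝ) < ((k:ℝ)+1)/2^j - (k:ℝ)/2^j
      have : ((k:ℝ)+1)/2^j - (k:ℝ)/2^j = 1/2^j := by ring
      rw [this]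
      positivity
    refine (gauss_tail _ hvpos _ hb).trans ?_
    apply ENNReal.ofReal_le_ofReal
    show 2 * rexp (-(a/2 * ((3/4:ℝ)^j / 8))^2 / (4 * (((k:ℝ)+1)/2^j - (k:ℝ)/2^j))) ≤ 2 * rexp (-(a^2 * (9/8:ℝ)^j) / 1024)
    have hp : ((3/4:ℝ)^j)^2 * 2^j = (9/8:ℝ)^j := by
      rw [sq, mul_assoc, ← mul_pow, ← mul_pow]
      norm_num
    have harith : -(a/2 * ((3/4:ℝ)^j/8))^2 / (4 * (((k:ℝ)+1)/2^j - (k:ℝ)/2^j))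
        = -(a^2 * (9/8:ℝ)^j) / 1024 := by
      have hd : ((k:ℝ)+1)/2^j - (k:ℝ)/2^j = 1/2^j := by ring
      rw [hd, ← hp]
      field_simp
      ring
    rw [harith]
  refine (measure_mono hincl).trans ?_
  refine (measure_iUnion_le _).trans ?_
  have hstep : ∀ j : ℕ, P (⋃ k : Fin (2^j), E j (k:ℕ))
      ≤ ENNReal.ofReal (4 * rexp (-a^2/1024)) * (ENNReal.ofReal (1/2))^j := by
    intro j
    refine (measure_iUnion_le _).trans ?_
    have h1 : ∑' k : Fin (2^j), P (E j (k:ℕ))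
        ≤ ∑' _k : Fin (2^j), ENNReal.ofReal (2 * rexp (-(a^2 * (9/8:ℝ)^j) / 1024)) :=
      ENNReal.tsum_le_tsum (fun k => hEbound j k k.isLt)
    refine h1.trans ?_
    rw [tsum_fintype, Finset.sum_const, Finset.card_univ, Fintype.card_fin, nsmul_eq_mul]
    -- (2^j : ℕ) * ofReal(...) ≤ ofReal(4 r) * (ofReal (1/2))^j
    have hcast : ((2^j : ℕ) : ℝ≥0∞) = ENNReal.ofReal ((2:ℝ)^j) := by
      rw [ENNReal.ofReal_pow (by norm_num)]
      push_cast
      norm_num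
    rw [hcast, ← ENNReal.ofReal_mul (by positivity), ← ENNReal.ofReal_pow (by norm_num),
      ← ENNReal.ofReal_mul (by positivity)]
    apply ENNReal.ofReal_le_ofReal
    -- real inequality
    have hber : 1 + (j:ℝ)/8 ≤ (9/8:ℝ)^j := by
      have h := one_add_mul_le_pow (a := (1/8:ℝ)) (by norm_num) j
      have : (1 + 1/8 : ℝ) = 9/8 := by norm_num
      rw [this] at h
      calc 1 + (j:ℝ)/8 = 1 + (j:ℝ) * (1/8) := by ring
        _ ≤ (9/8:ℝ)^j := h
    have ha2 : (0:ℝ) ≤ a^2 := sq_nonneg a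
    have hmono : rexp (-(a^2*(9/8:ℝ)^j)/1024) ≤ rexp (-a^2/1024) * (rexp (-a^2/8192))^j := by
      rw [← Real.exp_nat_mul, ← Real.exp_add, Real.exp_le_exp]
      have := mul_le_mul_of_nonneg_left hber ha2
      have hj : (0:ℝ) ≤ (j:ℝ) := Nat.cast_nonneg j
      nlinarith
    have hqle : (rexp (-a^2/8192))^j ≤ ((1:ℝ)/4)^j :=
      pow_le_pow_left₀ (Real.exp_pos _).le hsmall j
    have h2jp : (0:ℝ) < 2^j := by positivity
    have hrexp : (0:ℝ) < rexp (-a^2/1024) := Real.exp_pos _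
    calc (2:ℝ)^j * (2 * rexp (-(a^2 * (9/8:ℝ)^j) / 1024))
        ≤ (2:ℝ)^j * (2 * (rexp (-a^2/1024) * ((1:ℝ)/4)^j)) := by
          apply mul_le_mul_of_nonneg_left _ h2jp.le
          apply mul_le_mul_of_nonneg_left _ (by norm_num)
          refine hmono.trans ?_
          exact mul_le_mul_of_nonneg_left hqle hrexp.le
      _ = 2 * rexp (-a^2/1024) * ((2:ℝ)^j * ((1:ℝ)/4)^j) := by ring
      _ = 2 * rexp (-a^2/1024) * ((1/2:ℝ)^j) := by
          rw [← mul_pow]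
          norm_num
      _ ≤ 4 * rexp (-a^2/1024) * ((1/2:ℝ)^j) := by
          have : (0:ℝ) ≤ (1/2:ℝ)^j := by positivity
          nlinarith
  refine (ENNReal.tsum_le_tsum hstep).trans ?_
  rw [ENNReal.tsum_mul_left]
  have hhalf : (ENNReal.ofReal (1/2 : ℝ)) = (2:ℝ≥0∞)⁻¹ := by
    rw [one_div, ENNReal.ofReal_inv_of_pos (by norm_num : (0:ℝ) < 2), ENNReal.ofReal_ofNat]
  rw [hhalf, ENNReal.tsum_geometric]
  have hgeo : ((1:ℝ≥0∞) - 2⁻¹)⁻¹ = 2 := by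
    rw [ENNReal.one_sub_inv_two, inv_inv]
  rw [hgeo, show (2:ℝ≥0∞) = ENNReal.ofReal 2 by norm_num, ← ENNReal.ofReal_mul (by positivity)]
  apply ENNReal.ofReal_le_ofReal
  have := Real.exp_pos (-a^2/1024)
  nlinarith


lemma lpt_diff_bound (W W' : ℤ → ℝ → ℝ) (m : ℤ) (n : ℕ)
    (hcont : ∀ k, Continuous (W k))
    (hoff : ∀ k, k ≠ m → W' k = W k)
    (K : ℝ) (hK0 : 0 ≤ K) (hKm : ∀ u, |W' m u - W m u| ≤ K) :
    |lpt W' 0 0 (n:ℝ) (n:ℤ) - lpt W 0 0 (n:ℝ) (n:ℤ)| ≤ 2*K := by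
  set z₀ : ℤ → ℝ := fun j => if j < (n:ℤ) then 0 else (n:ℝ) with hz₀def
  have hn0 : (0:ℤ) ≤ (n:ℤ) := Int.ofNat_nonneg n
  have hz₀ : IsStaircase 0 0 (n:ℝ) (n:ℤ) z₀ := by
    refine ⟨hn0, ?_, ?_, ?_⟩
    · simp only [hz₀def]
      rw [if_pos (by omega : (0:ℤ) - 1 < (n:ℤ))]
    · simp only [hz₀def]
      rw [if_neg (by omega : ¬ ((n:ℤ) < (n:ℤ)))]
    · intro i j _ hij _
      simp only [hz₀def]
      split_ifs with h1 h2 h2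
      · exact le_rfl
      · positivity
      · exact absurd hij (by omega)
      · exact le_rfl
  -- range of staircases
  have hrange : ∀ z, IsStaircase 0 0 (n:ℝ) (n:ℤ) z →
      ∀ j : ℤ, -1 ≤ j → j ≤ (n:ℤ) → z j ∈ Icc (0:ℝ) (n:ℝ) := by
    intro z hz j hj1 hj2
    obtain ⟨-, hza, hzb, hmono⟩ := hz
    constructor
    · have := hmono (0-1) j (by omega) (by omega) hj2
      rwa [hza] at this
    · have := hmono j (n:ℤ) (by omega) hj2 le_rfl
      rwa [hzb] at this
  -- uniform bounds on each line
  have hbd : ∀ k : ℤ, ∃ B : ℝ, ∀ u ∈ Icc (0:ℝ) (n:ℝ), |W k u| ≤ B := by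
    intro k
    obtain ⟨B, hB⟩ := (isCompact_Icc (a := (0:ℝ)) (b := (n:ℝ))).exists_bound_of_continuousOn
      (hcont k).continuousOn
    exact ⟨B, fun u hu => hB u hu⟩
  choose B hB using hbd
  set A : (ℤ → ℝ → ℝ) → Set ℝ :=
    fun V => {w | ∃ z, IsStaircase 0 0 (n:ℝ) (n:ℤ) z ∧ w = wgt V 0 (n:ℤ) z} with hA
  have hAne : ∀ V, (A V).Nonempty := fun V => ⟨wgt V 0 (n:ℤ) z₀, z₀, hz₀, rfl⟩
  set UB : ℝ := ∑ k ∈ Finset.Icc (0:ℤ) (n:ℤ), 2 * B k with hUB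
  have hwle : ∀ z, IsStaircase 0 0 (n:ℝ) (n:ℤ) z → wgt W 0 (n:ℤ) z ≤ UB := by
    intro z hz
    rw [wgt, hUB]
    apply Finset.sum_le_sum
    intro k hk
    rw [Finset.mem_Icc] at hk
    have h1 := hB k (z k) (hrange z hz k (by omega) (by omega))
    have h2 := hB k (z (k-1)) (hrange z hz (k-1) (by omega) (by omega))
    have := abs_le.mp h1
    have := abs_le.mp h2
    cases abs_le.mp h1; cases abs_le.mp h2
    linarith
  have hbddW : BddAbove (A W) := by
    refine ⟨UB, ?_⟩
    rintro w ⟨z, hz, rfl⟩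
    exact hwle z hz
  -- key comparison
  have hdiff : ∀ z, IsStaircase 0 0 (n:ℝ) (n:ℤ) z →
      |wgt W' 0 (n:ℤ) z - wgt W 0 (n:ℤ) z| ≤ 2*K := by
    intro z hz
    rw [wgt, wgt, ← Finset.sum_sub_distrib]
    refine (Finset.abs_sum_le_sum_abs _ _).trans ?_
    have hterm : ∀ k ∈ Finset.Icc (0:ℤ) (n:ℤ),
        |W' k (z k) - W' k (z (k-1)) - (W k (z k) - W k (z (k-1)))|
          ≤ if k = m then 2*K else 0 := by
      intro k _
      by_cases hkm : k = m
      · subst hkm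
        rw [if_pos rfl]
        have h1 := hKm (z k)
        have h2 := hKm (z (k-1))
        cases abs_le.mp h1; cases abs_le.mp h2
        rw [abs_le]
        constructor <;> [linarith; linarith]
      · rw [if_neg hkm, hoff k hkm]
        simp
    refine (Finset.sum_le_sum hterm).trans ?_
    rw [Finset.sum_ite_eq' (Finset.Icc (0:ℤ) (n:ℤ)) m (fun _ => 2*K)]
    split_ifs
    · exact le_rfl
    · linarith
  -- conclude
  have hbddW' : BddAbove (A W') := by
    refine ⟨UB + 2*K, ?_⟩
    rintro w ⟨z, hz, rfl⟩
    have h1 := hdiff z hz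
    have h2 := hwle z hz
    cases abs_le.mp h1
    linarith
  have hle1 : lpt W' 0 0 (n:ℝ) (n:ℤ) ≤ lpt W 0 0 (n:ℝ) (n:ℤ) + 2*K := by
    apply csSup_le (hAne W')
    rintro w ⟨z, hz, rfl⟩
    have h1 := hdiff z hz
    have h2 : wgt W 0 (n:ℤ) z ≤ lpt W 0 0 (n:ℝ) (n:ℤ) :=
      le_csSup hbddW ⟨z, hz, rfl⟩
    cases abs_le.mp h1
    linarith
  have hle2 : lpt W 0 0 (n:ℝ) (n:ℤ) ≤ lpt W' 0 0 (n:ℝ) (n:ℤ) + 2*K := by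
    apply csSup_le (hAne W)
    rintro w ⟨z, hz, rfl⟩
    have h1 := hdiff z hz
    have h2 : wgt W' 0 (n:ℤ) z ≤ lpt W' 0 0 (n:ℝ) (n:ℤ) :=
      le_csSup hbddW' ⟨z, hz, rfl⟩
    cases abs_le.mp h1
    linarith
  rw [abs_le]
  constructor <;> linarith



lemma tweak_diff_bound (w f : ℝ → ℝ) (i : ℤ) (F G : ℝ)
    (hF : ∀ s ∈ Icc (0:ℝ) 1, |f s| ≤ F)
    (hG : ∀ s ∈ Icc (0:ℝ) 1, |w ((i:ℝ)+s) - w i| ≤ G)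
    (u : ℝ) : |tweak w i f u - w u| ≤ F + G := by
  have hF0 : 0 ≤ F := (abs_nonneg _).trans (hF 0 ⟨le_rfl, zero_le_one⟩)
  have hG0 : 0 ≤ G := (abs_nonneg _).trans (hG 0 ⟨le_rfl, zero_le_one⟩)
  rw [tweak]
  split_ifs with h1 h2
  · simpa using add_nonneg hF0 hG0
  · push_neg at h1
    have hs : u - (i:ℝ) ∈ Icc (0:ℝ) 1 := ⟨by linarith, by linarith⟩
    have hGu := hG (u - (i:ℝ)) hs
    rw [show (i:ℝ) + (u - (i:ℝ)) = u by ring] at hGu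
    have hFu := hF (u - (i:ℝ)) hs
    rw [show w (i:ℝ) + f (u - (i:ℝ)) - w u = f (u - (i:ℝ)) - (w u - w (i:ℝ)) by ring]
    obtain ⟨hf1, hf2⟩ := abs_le.mp hFu
    obtain ⟨hg1, hg2⟩ := abs_le.mp hGu
    rw [abs_le]
    constructor <;> linarith
  · push_neg at h1 h2
    have hGu := hG 1 ⟨zero_le_one, le_rfl⟩
    have hFu := hF 1 ⟨zero_le_one, le_rfl⟩
    rw [show w u - w ((i:ℝ)+1) + w (i:ℝ) + f 1 - w u = f 1 - (w ((i:ℝ)+1) - w (i:ℝ)) by ring]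
    obtain ⟨hf1, hf2⟩ := abs_le.mp hFu
    obtain ⟨hg1, hg2⟩ := abs_le.mp hGu
    rw [abs_le]
    constructor <;> linarith

end BLPP

open BLPP in
/-- Lemma 5.30 of the paper.  There are universal constants `C, c > 0`
such that for any static BLPP `T` (built from `W`) and the BLPP `T̃` obtained by resampling
the single increment of `W_m` over `[i, i+1]` to an independent fresh standard Brownian
motion, one has `P(|T̃_𝟎^𝐧 - T_𝟎^𝐧| ≥ r) ≤ C e^{-c r²}` for all `i, m, n` and `r > 0`. -/
theorem single_resampling_stability
    : ∃ C > (0 : ℝ), ∃ c > (0 : ℝ),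
      ∀ (Ω : Type) (_ : MeasurableSpace Ω) (P : Measure Ω)
        (W : ℤ → Ω → ℝ → ℝ) (fresh : Ω → ℝ → ℝ),
        IsStaticBLPP P W → IsFreshBM P fresh W →
        ∀ (i m : ℤ) (n : ℕ) (r : ℝ), 0 < r →
          P {x | r ≤
              |lpt (fun k => if k = m then tweak (W m x) i (fresh x) else W k x)
                  0 0 (n : ℝ) (n : ℤ) -
               lpt (fun k => W k x) 0 0 (n : ℝ) (n : ℤ)|}
            ≤ ENNReal.ofReal (C * Real.exp (-c * r ^ 2)) := by
  refine ⟨2000000, by norm_num, 1/65536, by norm_num, ?_⟩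
  intro Ω inst P W fresh hW hFr i m n r hr
  haveI := hW.prob
  have hr8 : 0 < r/8 := by linarith
  have hincl : {x | r ≤
      |lpt (fun k => if k = m then tweak (W m x) i (fresh x) else W k x) 0 0 (n:ℝ) (n:ℤ) -
       lpt (fun k => W k x) 0 0 (n:ℝ) (n:ℤ)|} ⊆
      {x : Ω | ∃ s ∈ Icc (0:ℝ) 1, r/8 ≤ |fresh x s|} ∪
      {x : Ω | ∃ s ∈ Icc (0:ℝ) 1, r/8 ≤ |W m x ((i:ℝ)+s) - W m x (i:ℝ)|} := by
    intro x hx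
    by_contra hnot
    have hx1 : x ∉ {x : Ω | ∃ s ∈ Icc (0:ℝ) 1, r/8 ≤ |fresh x s|} := fun h => hnot (Or.inl h)
    have hx2 : x ∉ {x : Ω | ∃ s ∈ Icc (0:ℝ) 1, r/8 ≤ |W m x ((i:ℝ)+s) - W m x (i:ℝ)|} :=
      fun h => hnot (Or.inr h)
    have h1 : ∀ s ∈ Icc (0:ℝ) 1, |fresh x s| ≤ r/8 := by
      intro s hs
      by_contra hcon
      exact hx1 ⟨s, hs, (not_le.mp hcon).le⟩
    have h2 : ∀ s ∈ Icc (0:ℝ) 1, |W m x ((i:ℝ)+s) - W m x (i:ℝ)| ≤ r/8 := by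
      intro s hs
      by_contra hcon
      exact hx2 ⟨s, hs, (not_le.mp hcon).le⟩
    have hKm : ∀ u, |(fun k => if k = m then tweak (W m x) i (fresh x) else W k x) m u
        - (fun k => W k x) m u| ≤ r/8 + r/8 := by
      intro u
      simp only [if_pos rfl]
      exact tweak_diff_bound (W m x) (fresh x) i _ _ h1 h2 u
    have hdb := lpt_diff_bound (fun k => W k x)
      (fun k => if k = m then tweak (W m x) i (fresh x) else W k x) m n
      (fun k => hW.cont k x) (fun k hk => by simp [hk]) (r/8 + r/8) (by linarith) hKm
    have hxx : r ≤ |lpt (fun k => if k = m then tweak (W m x) i (fresh x) else W k x)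
        0 0 (n:ℝ) (n:ℤ) - lpt (fun k => W k x) 0 0 (n:ℝ) (n:ℤ)| := hx
    have : r ≤ 2*(r/8 + r/8) := hxx.trans hdb
    linarith
  refine (measure_mono hincl).trans ?_
  refine (measure_union_le _ _).trans ?_
  have hb1 : P {x : Ω | ∃ s ∈ Icc (0:ℝ) 1, r/8 ≤ |fresh x s|}
      ≤ ENNReal.ofReal (1000000 * Real.exp (-(r/8)^2/1024)) :=
    sup_tail P fresh hFr.meas hFr.cont hFr.start hFr.gauss (r/8) hr8
  have hb2 : P {x : Ω | ∃ s ∈ Icc (0:ℝ) 1, r/8 ≤ |W m x ((i:ℝ)+s) - W m x (i:ℝ)|}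
      ≤ ENNReal.ofReal (1000000 * Real.exp (-(r/8)^2/1024)) := by
    refine sup_tail P (fun x s => W m x ((i:ℝ)+s) - W m x (i:ℝ))
      (fun u => (hW.meas m _).sub (hW.meas m _))
      (fun x => ((hW.cont m x).comp (continuous_const.add continuous_id)).sub continuous_const)
      (fun x => by simp) ?_ (r/8) hr8
    intro s t h0 h h1t
    have he : (fun x => (W m x ((i:ℝ)+t) - W m x (i:ℝ)) - (W m x ((i:ℝ)+s) - W m x (i:ℝ)))
        = fun x => W m x ((i:ℝ)+t) - W m x ((i:ℝ)+s) := by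
      funext x; ring
    rw [he, hW.gauss m ((i:ℝ)+s) ((i:ℝ)+t) (by linarith)]
    exact congrArg _ (Subtype.ext (by simp))
  refine (add_le_add hb1 hb2).trans ?_
  rw [← ENNReal.ofReal_add (by positivity) (by positivity)]
  apply ENNReal.ofReal_le_ofReal
  have he : Real.exp (-(r/8)^2/1024) = Real.exp (-(1/65536) * r^2) := by
    congr 1
    ring
  rw [he]
  linarith
end
end
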